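/- arXiv:1511.05442 — 6 statements merged into one kernel-verified Lean document; each statement's English description precedes it below -/
import Mathlib

section
/- A finite semigroup S is not Mal'cev nilpotent if and only if there exist a positive integer m, distinct elements x, y ∈ S, and elements w₁, w₂, …, w_m ∈ S¹ such that x = λ_m(x, y, w₁, …, w_m) and y = ρ_m(x, y, w₁, …, w_m). -/
/-- The pair (λ_n, ρ_n) computed in S¹ = `WithOne S`, where `z i` is the i-th
inserted element (only `z 1, …, z n` matter for the n-th term). -/
def lrho {S : Type*} [Semigroup S] (x y : WithOne S) (z : ℕ → WithOne S) :
    ℕ → WithOne S × WithOne S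
  | 0 => (x, y)
  | n + 1 =>
    ((lrho x y z n).1 * z (n + 1) * (lrho x y z n).2,
     (lrho x y z n).2 * z (n + 1) * (lrho x y z n).1)

/-- A semigroup is Mal'cev nilpotent if for some `n ≥ 1`,
`λ_n(a,b,c₁,…,c_n) = ρ_n(a,b,c₁,…,c_n)` for all `a b ∈ S`, `cᵢ ∈ S¹`. -/
def IsMN (S : Type*) [Semigroup S] : Prop :=
  ∃ n : ℕ, 0 < n ∧ ∀ (a b : S) (c : ℕ → WithOne S),
    (lrho (a : WithOne S) (b : WithOne S) c n).1 =
      (lrho (a : WithOne S) (b : WithOne S) c n).2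

lemma lrho_shift {S : Type*} [Semigroup S] (x y : WithOne S) (z : ℕ → WithOne S) (n : ℕ) :
    ∀ k, lrho x y z (n + k) =
      lrho (lrho x y z n).1 (lrho x y z n).2 (fun i => z (n + i)) k := by
  intro k
  induction k with
  | zero => rfl
  | succ k ih =>
      show lrho x y z ((n + k) + 1) = _
      rw [lrho, ih]
      rfl

lemma lrho_congr {S : Type*} [Semigroup S] (x y : WithOne S) (z z' : ℕ → WithOne S) (n : ℕ)
    (h : ∀ i, 1 ≤ i → i ≤ n → z i = z' i) : lrho x y z n = lrho x y z' n := by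
  induction n with
  | zero => rfl
  | succ n ih =>
      rw [lrho, lrho, ih (fun i h1 h2 => h i h1 (by omega)), h (n + 1) (by omega) le_rfl]

lemma lrho_eq_propagate {S : Type*} [Semigroup S] (x y : WithOne S) (z : ℕ → WithOne S) (n : ℕ)
    (h : (lrho x y z n).1 = (lrho x y z n).2) :
    ∀ k, (lrho x y z (n + k)).1 = (lrho x y z (n + k)).2 := by
  intro k
  induction k with
  | zero => exact h
  | succ k ih =>
      show (lrho x y z ((n + k) + 1)).1 = (lrho x y z ((n + k) + 1)).2
      rw [lrho]
      simp [ih]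

lemma lrho_mem {S : Type*} [Semigroup S] (a b : S) (z : ℕ → WithOne S) (n : ℕ) :
    ∃ p q : S, lrho (a : WithOne S) (b : WithOne S) z n = ((p : WithOne S), (q : WithOne S)) := by
  induction n with
  | zero => exact ⟨a, b, rfl⟩
  | succ n ih =>
      obtain ⟨p, q, h⟩ := ih
      rw [lrho, h]
      induction (z (n + 1)) using WithOne.cases_on
      · exact ⟨p * q, q * p, by simp⟩
      · intro s
        exact ⟨p * s * q, q * s * p, by
          simp [← WithOne.coe_mul]⟩

/-- A finite semigroup S is not Mal'cev nilpotent iff there exist `m ≥ 1`,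
distinct `x y ∈ S` and `w₁, …, w_m ∈ S¹` with `x = λ_m(x,y,w₁,…,w_m)` and
`y = ρ_m(x,y,w₁,…,w_m)`. -/
theorem not_isMN_iff (S : Type*) [Semigroup S] [Finite S] :
    ¬ IsMN S ↔
      ∃ (m : ℕ) (x y : S) (w : ℕ → WithOne S), 0 < m ∧ x ≠ y ∧
        (x : WithOne S) = (lrho (x : WithOne S) (y : WithOne S) w m).1 ∧
        (y : WithOne S) = (lrho (x : WithOne S) (y : WithOne S) w m).2 := by
  constructor
  · intro hMN
    rw [IsMN] at hMN
    push_neg at hMN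
    have : Finite (WithOne S) := Finite.of_equiv _ (Equiv.optionEquivSumPUnit.{0} S).symm
    have : Fintype (WithOne S × WithOne S) := Fintype.ofFinite _
    set n₀ := Fintype.card (WithOne S × WithOne S) with hn₀
    have hpos : 0 < n₀ := Fintype.card_pos
    obtain ⟨a, b, c, hne⟩ := hMN n₀ hpos
    obtain ⟨i, j, hij, hfij⟩ := Fintype.exists_ne_map_eq_of_card_lt
      (fun k : Fin (n₀ + 1) => lrho (a : WithOne S) (b : WithOne S) c k)
      (by simp [hn₀])
    -- WLOG i < j
    wlog hlt : (i : ℕ) < (j : ℕ) generalizing i j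
    · have hne' : (i : ℕ) ≠ (j : ℕ) := fun h => hij (Fin.ext h)
      exact this j i hij.symm hfij.symm (by omega)
    obtain ⟨p, q, hpq⟩ := lrho_mem a b c (i : ℕ)
    refine ⟨(j : ℕ) - (i : ℕ), p, q, fun k => c ((i : ℕ) + k), by omega, ?_, ?_, ?_⟩
    · -- p ≠ q
      intro h
      subst h
      have h1 : (lrho (a : WithOne S) (b : WithOne S) c (i : ℕ)).1
          = (lrho (a : WithOne S) (b : WithOne S) c (i : ℕ)).2 := by rw [hpq]
      have h2 := lrho_eq_propagate _ _ _ _ h1 (n₀ - (i : ℕ))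
      have h3 : (i : ℕ) + (n₀ - (i : ℕ)) = n₀ := by omega
      rw [h3] at h2
      exact hne h2
    · have h1 := lrho_shift (a : WithOne S) (b : WithOne S) c (i : ℕ) ((j : ℕ) - (i : ℕ))
      have h2 : (i : ℕ) + ((j : ℕ) - (i : ℕ)) = (j : ℕ) := by omega
      rw [h2, hpq] at h1
      have h4 : lrho (a : WithOne S) (b : WithOne S) c (j : ℕ)
          = ((p : WithOne S), (q : WithOne S)) := hfij ▸ hpq
      rw [h4] at h1
      exact congrArg Prod.fst h1
    · have h1 := lrho_shift (a : WithOne S) (b : WithOne S) c (i : ℕ) ((j : ℕ) - (i : ℕ))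
      have h2 : (i : ℕ) + ((j : ℕ) - (i : ℕ)) = (j : ℕ) := by omega
      rw [h2, hpq] at h1
      have h4 : lrho (a : WithOne S) (b : WithOne S) c (j : ℕ)
          = ((p : WithOne S), (q : WithOne S)) := hfij ▸ hpq
      rw [h4] at h1
      exact congrArg Prod.snd h1
  · rintro ⟨m, x, y, w, hm, hxy, hx, hy⟩
    rintro ⟨n, hn, H⟩
    set z : ℕ → WithOne S := fun i => w ((i - 1) % m + 1) with hz
    have key : ∀ k, lrho (x : WithOne S) (y : WithOne S) z (k * m)
        = ((x : WithOne S), (y : WithOne S)) := by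
      intro k
      induction k with
      | zero => rw [Nat.zero_mul]; rfl
      | succ k ih =>
          have h1 : (k + 1) * m = k * m + m := by ring
          rw [h1, lrho_shift, ih]
          have h2 : (fun i => z (k * m + i)) = fun i => w ((k * m + i - 1) % m + 1) := rfl
          have h3 : lrho (x : WithOne S) (y : WithOne S) (fun i => z (k * m + i)) m
              = lrho (x : WithOne S) (y : WithOne S) w m := by
            apply lrho_congr
            intro i hi1 hi2
            show w ((k * m + i - 1) % m + 1) = w i
            congr 1
            have : k * m + i - 1 = (i - 1) + k * m := by omega
            rw [this, Nat.add_mul_mod_self_right, Nat.mod_eq_of_lt (by omega)]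
            omega
          simp only [h3]
          exact Prod.ext hx.symm hy.symm
    have hEq : (lrho (x : WithOne S) (y : WithOne S) z n).1
        = (lrho (x : WithOne S) (y : WithOne S) z n).2 := H x y z
    have h2 := lrho_eq_propagate _ _ _ _ hEq (n * m - n)
    have h3 : n + (n * m - n) = n * m := by
      have : n ≤ n * m := Nat.le_mul_of_pos_right n hm
      omega
    rw [h3, key n] at h2
    exact hxy (WithOne.coe_inj.mp h2)
end

section
/- For every finite semigroup S and all elements x, y, z ∈ S, the sequence n ↦ (λ_{n!}(x, y, z, z², …, z^{n!}), ρ_{n!}(x, y, z, z², …, z^{n!})), in which the i-th inserted element is z^i, is eventually constant. -/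
/-- For a finite semigroup, the sequence
`n ↦ (λ_{n!}(x,y,z,z²,…,z^{n!}), ρ_{n!}(x,y,z,z²,…,z^{n!}))` is eventually
constant. -/
theorem lrho_pow_factorial_eventually_constant (S : Type*) [Semigroup S]
    [Finite S] (x y z : S) :
    ∃ N : ℕ, ∀ n : ℕ, N ≤ n →
      lrho (x : WithOne S) (y : WithOne S)
          (fun i => (z : WithOne S) ^ i) (Nat.factorial n) =
        lrho (x : WithOne S) (y : WithOne S)
          (fun i => (z : WithOne S) ^ i) (Nat.factorial N) := by
  classical
  have : Finite (WithOne S) := by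
    have := Fintype.ofFinite S
    exact inferInstanceAs (Finite (Option S))
  set z' : WithOne S := (z : WithOne S) with hz'
  set T : (WithOne S × WithOne S) × WithOne S → (WithOne S × WithOne S) × WithOne S :=
    fun p => ((p.1.1 * p.2 * p.1.2, p.1.2 * p.2 * p.1.1), p.2 * z') with hT
  set a : (WithOne S × WithOne S) × WithOne S := ((x, y), z') with ha
  have key : ∀ n, T^[n] a = (lrho x y (fun i => z' ^ i) n, z' ^ (n + 1)) := by
    intro n
    induction n with
    | zero => simp [lrho, ha, pow_one]
    | succ n ih =>
      rw [Function.iterate_succ_apply', ih]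
      simp [hT, lrho, pow_succ]
  obtain ⟨i, j, hne, hij⟩ := Finite.exists_ne_map_eq_of_infinite (fun n : ℕ => T^[n] a)
  wlog hlt : i < j generalizing i j
  · exact this j i hne.symm hij.symm (by omega)
  set q : ℕ := j - i with hq
  have hqpos : 0 < q := by omega
  have per : ∀ k, i ≤ k → T^[k + q] a = T^[k] a := by
    intro k hk
    obtain ⟨d, rfl⟩ := Nat.exists_eq_add_of_le hk
    calc T^[i + d + q] a = T^[d] (T^[j] a) := by
          rw [← Function.iterate_add_apply]; congr 1; omega
      _ = T^[d] (T^[i] a) := by rw [hij]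
      _ = T^[i + d] a := by rw [← Function.iterate_add_apply]; congr 1; omega
  have per' : ∀ b m : ℕ, i ≤ b → T^[b + m * q] a = T^[b] a := by
    intro b m hb
    induction m with
    | zero => simp
    | succ m ih =>
      have h : b + (m + 1) * q = (b + m * q) + q := by ring
      rw [h, per _ (by omega), ih]
  refine ⟨max i q, fun n hn => ?_⟩
  set N := max i q with hN
  have h1 : i ≤ N.factorial := le_trans (le_max_left i q) (Nat.self_le_factorial N)
  have h2 : N.factorial ≤ n.factorial := Nat.factorial_le hn
  have hqN : q ∣ N.factorial := Nat.dvd_factorial hqpos (le_max_right i q)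
  have hqn : q ∣ n.factorial := Nat.dvd_factorial hqpos (le_trans (le_max_right i q) hn)
  obtain ⟨m, hm⟩ := Nat.dvd_sub hqn hqN
  have hm' : n.factorial - N.factorial = m * q := by rw [hm, mul_comm]
  have heq : n.factorial = N.factorial + m * q := by omega
  have hT2 : T^[n.factorial] a = T^[N.factorial] a := by
    rw [heq]; exact per' _ _ h1
  have e1 := key n.factorial
  rw [hT2, key N.factorial] at e1
  exact (congrArg Prod.fst e1).symm
end

section
/- Every finite Neumann–Taylor semigroup is in NDF₁₂; that is, if S is a finite semigroup satisfying the Neumann–Taylor condition, then S belongs to BG_nil and S is divisible neither by F₇ nor by F₁₂. -/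
/-- A semigroup is Neumann–Taylor if for some `n ≥ 2`,
`λ_n(a,b,1,c₂,…,c_n) = ρ_n(a,b,1,c₂,…,c_n)` for all `a b ∈ S`, `cᵢ ∈ S¹`. -/
def IsNT (S : Type*) [Semigroup S] : Prop :=
  ∃ n : ℕ, 2 ≤ n ∧ ∀ (a b : S) (c : ℕ → WithOne S),
    (lrho (a : WithOne S) (b : WithOne S) (fun i => if i = 1 then 1 else c i) n).1 =
      (lrho (a : WithOne S) (b : WithOne S) (fun i => if i = 1 then 1 else c i) n).2

/-- `Divides S T` : S is a homomorphic image of a subsemigroup of T, i.e. S ≺ T. -/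
def Divides (S T : Type*) [Mul S] [Mul T] : Prop :=
  ∃ (U : Subsemigroup T) (f : U →ₙ* S), Function.Surjective f

/-- The 7-element semigroup F₇ = {θ, 1, u, e₁₁, e₁₂, e₂₁, e₂₂}. -/
inductive F7 : Type
  | th | one | u | e11 | e12 | e21 | e22
  deriving DecidableEq

instance : Fintype F7 :=
  ⟨{F7.th, F7.one, F7.u, F7.e11, F7.e12, F7.e21, F7.e22}, fun x => by cases x <;> decide⟩

namespace F7

/-- Multiplication table of F₇: θ is a zero, 1 is an identity, u² = 1,
`e_{ij} e_{kl} = e_{il}` if `j = k` and θ otherwise, `e_{ij} u = e_{ij'}`,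
`u e_{ij} = e_{i'j}` where `1' = 2`, `2' = 1`. -/
def mul : F7 → F7 → F7
  | th, _ => th
  | _, th => th
  | one, x => x
  | x, one => x
  | u, u => one
  | u, e11 => e21
  | u, e12 => e22
  | u, e21 => e11
  | u, e22 => e12
  | e11, u => e12
  | e12, u => e11
  | e21, u => e22
  | e22, u => e21
  | e11, e11 => e11
  | e11, e12 => e12
  | e11, _ => th
  | e12, e21 => e11
  | e12, e22 => e12
  | e12, _ => th
  | e21, e11 => e21
  | e21, e12 => e22
  | e21, _ => th
  | e22, e21 => e21
  | e22, e22 => e22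
  | e22, _ => th

instance : Mul F7 := ⟨mul⟩

instance : Semigroup F7 where
  mul_assoc := by decide

end F7

/-- Transformations of the 4-element set {1, 2, 3, θ} (θ is index 3), acting on
the right: the product `s * t` means "apply s first, then t". -/
structure Tr4 : Type where
  toFun : Fin 4 → Fin 4

instance : DecidableEq Tr4 := fun a b =>
  decidable_of_iff (a.toFun = b.toFun) (by cases a; cases b; simp)

instance : Mul Tr4 := ⟨fun a b => ⟨b.toFun ∘ a.toFun⟩⟩

instance : Semigroup Tr4 := ⟨fun _ _ _ => rfl⟩

/-- The constant map with value θ. -/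
def thT : Tr4 := ⟨fun _ => 3⟩
/-- `eT i j` sends i to j and every other point to θ. -/
def eT (i j : Fin 4) : Tr4 := ⟨fun x => if x = i then j else 3⟩
/-- w₁ fixes 1 and sends 3 ↦ 2, 2 ↦ θ, θ ↦ θ. -/
def w1T : Tr4 := ⟨![0, 3, 1, 3]⟩
/-- w₂ sends 3 ↦ 1, 1 ↦ 2, 2 ↦ θ, θ ↦ θ. -/
def w2T : Tr4 := ⟨![1, 3, 0, 3]⟩

/-- The 12 elements of F₁₂: θ̄, the nine e_{ij} (i, j ∈ {1,2,3}), w₁ and w₂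
(the subsemigroup generated by w₁, w₂ consists of w₁, w₂, e₁₁, e₁₂, e₃₁, e₃₂). -/
def F12list : List Tr4 :=
  [thT, eT 0 0, eT 0 1, eT 0 2, eT 1 0, eT 1 1, eT 1 2, eT 2 0, eT 2 1, eT 2 2, w1T, w2T]

/-- F₁₂ as a subsemigroup of the transformation semigroup on {1,2,3,θ}. -/
def F12 : Subsemigroup Tr4 where
  carrier := {a | a ∈ F12list}
  mul_mem' := by
    intro a b ha hb
    simp only [F12list, Set.mem_setOf_eq, List.mem_cons, List.not_mem_nil, or_false] at ha hb ⊢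
    rcases ha with rfl | rfl | rfl | rfl | rfl | rfl | rfl | rfl | rfl | rfl | rfl | rfl <;>
      rcases hb with rfl | rfl | rfl | rfl | rfl | rfl | rfl | rfl | rfl | rfl | rfl | rfl <;>
      decide

/-- A block group: each element has at most one inverse. -/
def IsBlockGroup (S : Type*) [Semigroup S] : Prop :=
  ∀ s x y : S,
    (s * x * s = s ∧ x * s * x = x) → (s * y * s = s ∧ y * s * y = y) → x = y

/-- `S ∈ BG_nil`: S is a block group and every subsemigroup of S that is a group
(equivalently, every finite group embedding into S) is nilpotent. -/
def IsBGnil (S : Type*) [Semigroup S] : Prop :=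
  IsBlockGroup S ∧
    ∀ (G : Type) [Group G] [Finite G] (f : G →ₙ* S),
      Function.Injective f → Group.IsNilpotent G

/-- `S ∈ NDF₁₂`: S is in BG_nil and is divisible neither by F₇ nor by F₁₂. -/
def IsNDF12 (S : Type*) [Semigroup S] : Prop :=
  IsBGnil S ∧ ¬ Divides F7 S ∧ ¬ Divides (↥F12) S

section NTAux

/-- Monoid version of `lrho`. -/
def lrM {M : Type*} [Monoid M] (x y : M) (z : ℕ → M) : ℕ → M × M
  | 0 => (x, y)
  | n + 1 =>
    ((lrM x y z n).1 * z (n + 1) * (lrM x y z n).2,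
     (lrM x y z n).2 * z (n + 1) * (lrM x y z n).1)

theorem lrho_eq_lrM {S : Type*} [Semigroup S] (x y : WithOne S) (z : ℕ → WithOne S) :
    ∀ n, lrho x y z n = lrM x y z n
  | 0 => rfl
  | n + 1 => by rw [lrho, lrM, lrho_eq_lrM x y z n]

theorem lrM_hom {M N : Type*} [Monoid M] [Monoid N] (φ : M →* N) (x y : M) (z : ℕ → M) :
    ∀ n, lrM (φ x) (φ y) (fun i => φ (z i)) n = (φ (lrM x y z n).1, φ (lrM x y z n).2)
  | 0 => rfl
  | n + 1 => by
    rw [lrM, lrM, lrM_hom φ x y z n]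
    simp [map_mul]

theorem withOneMap_surjective {α β : Type*} [Mul α] [Mul β] {f : α →ₙ* β}
    (hf : Function.Surjective f) : Function.Surjective (WithOne.mapMulHom f) := by
  intro w
  refine WithOne.cases_on w ⟨1, map_one _⟩ fun b => ?_
  obtain ⟨a, ha⟩ := hf b
  exact ⟨a, by rw [WithOne.mapMulHom_coe, ha]⟩

theorem withOneMap_injective {α β : Type*} [Mul α] [Mul β] {f : α →ₙ* β}
    (hf : Function.Injective f) : Function.Injective (WithOne.mapMulHom f) := by
  intro v w h
  rcases eq_or_ne v 1 with rfl | hv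
  · rcases eq_or_ne w 1 with rfl | hw
    · rfl
    · obtain ⟨b, rfl⟩ := WithOne.ne_one_iff_exists.mp hw
      rw [map_one, WithOne.mapMulHom_coe] at h
      exact absurd h.symm WithOne.coe_ne_one
  · obtain ⟨a, rfl⟩ := WithOne.ne_one_iff_exists.mp hv
    rcases eq_or_ne w 1 with rfl | hw
    · rw [map_one, WithOne.mapMulHom_coe] at h
      exact absurd h WithOne.coe_ne_one
    · obtain ⟨b, rfl⟩ := WithOne.ne_one_iff_exists.mp hw
      rw [WithOne.mapMulHom_coe, WithOne.mapMulHom_coe] at h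
      exact congrArg _ (hf (WithOne.coe_inj.mp h))

end NTAux

theorem IsNT.of_divides {S T : Type*} [Semigroup S] [Semigroup T]
    (hT : IsNT T) (hd : Divides S T) : IsNT S := by
  obtain ⟨U, f, hf⟩ := hd
  obtain ⟨n, hn, hid⟩ := hT
  refine ⟨n, hn, fun a b c => ?_⟩
  obtain ⟨a', ha⟩ := hf a
  obtain ⟨b', hb⟩ := hf b
  choose c' hc' using fun i => withOneMap_surjective hf (c i)
  have keyT := hid (a' : T) (b' : T) fun i => WithOne.mapMulHom (MulMemClass.subtype U) (c' i)
  rw [lrho_eq_lrM] at keyT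
  have hz1 : (fun i => if i = 1 then (1 : WithOne T) else WithOne.mapMulHom (MulMemClass.subtype U) (c' i))
      = fun i => WithOne.mapMulHom (MulMemClass.subtype U) (if i = 1 then 1 else c' i) := by
    funext i
    by_cases hi : i = 1 <;> simp [hi]
  rw [hz1, show (((a' : T)) : WithOne T) = WithOne.mapMulHom (MulMemClass.subtype U) (↑a') from
      (WithOne.mapMulHom_coe (MulMemClass.subtype U) a').symm,
    show (((b' : T)) : WithOne T) = WithOne.mapMulHom (MulMemClass.subtype U) (↑b') from
      (WithOne.mapMulHom_coe (MulMemClass.subtype U) b').symm, lrM_hom] at keyT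
  have hU := withOneMap_injective (f := (MulMemClass.subtype U)) Subtype.val_injective keyT
  rw [lrho_eq_lrM]
  have hz2 : (fun i => if i = 1 then (1 : WithOne S) else c i)
      = fun i => WithOne.mapMulHom f (if i = 1 then 1 else c' i) := by
    funext i
    by_cases hi : i = 1 <;> simp [hi, hc']
  rw [hz2, show ((a : S) : WithOne S) = WithOne.mapMulHom f (↑a') from by rw [WithOne.mapMulHom_coe, ha],
    show ((b : S) : WithOne S) = WithOne.mapMulHom f (↑b') from by rw [WithOne.mapMulHom_coe, hb], lrM_hom]
  exact congrArg (WithOne.mapMulHom f) hU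

theorem lrM_const_one {S : Type*} [Semigroup S] {e f : S} (hef : e * f = e) (hfe : f * e = f)
    (Z : ℕ → WithOne S) (hZ : ∀ i, Z i = 1) :
    ∀ k, lrM (e : WithOne S) (f : WithOne S) Z (k + 1) = (↑e, ↑f) := by
  intro k
  induction k with
  | zero =>
    show ((e : WithOne S) * Z 1 * f, (f : WithOne S) * Z 1 * e) = (↑e, ↑f)
    rw [hZ 1, mul_one, mul_one, ← WithOne.coe_mul, ← WithOne.coe_mul, hef, hfe]
  | succ k ih =>
    show ((lrM (e : WithOne S) (f : WithOne S) Z (k+1)).1 * Z (k+2) *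
            (lrM (e : WithOne S) (f : WithOne S) Z (k+1)).2,
          (lrM (e : WithOne S) (f : WithOne S) Z (k+1)).2 * Z (k+2) *
            (lrM (e : WithOne S) (f : WithOne S) Z (k+1)).1) = (↑e, ↑f)
    rw [ih, hZ (k+2)]
    show ((e : WithOne S) * 1 * f, (f : WithOne S) * 1 * e) = (↑e, ↑f)
    rw [mul_one, mul_one, ← WithOne.coe_mul, ← WithOne.coe_mul, hef, hfe]

theorem IsNT.cancel_ef {S : Type*} [Semigroup S] (h : IsNT S) {e f : S}
    (hef : e * f = e) (hfe : f * e = f) : e = f := by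
  obtain ⟨n, hn, hid⟩ := h
  have key := hid e f fun _ => 1
  rw [lrho_eq_lrM] at key
  obtain ⟨k, rfl⟩ : ∃ k, n = k + 1 := ⟨n - 1, by omega⟩
  rw [lrM_const_one hef hfe _ (fun i => by simp) k] at key
  exact WithOne.coe_inj.mp key

theorem lrM_swap {S : Type*} [Semigroup S] {e f : S} (hef : e * f = f) (hfe : f * e = e)
    (Z : ℕ → WithOne S) (hZ : ∀ i, Z i = 1) :
    ∀ k, lrM (e : WithOne S) (f : WithOne S) Z (k + 1) = (↑f, ↑e) ∨
         lrM (e : WithOne S) (f : WithOne S) Z (k + 1) = (↑e, ↑f) := by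
  intro k
  induction k with
  | zero =>
    left
    show ((e : WithOne S) * Z 1 * f, (f : WithOne S) * Z 1 * e) = (↑f, ↑e)
    rw [hZ 1, mul_one, mul_one, ← WithOne.coe_mul, ← WithOne.coe_mul, hef, hfe]
  | succ k ih =>
    have step : ∀ p q : WithOne S,
        lrM (e : WithOne S) (f : WithOne S) Z (k+1) = (p, q) →
        lrM (e : WithOne S) (f : WithOne S) Z (k+2) = (p * 1 * q, q * 1 * p) := by
      intro p q hpq
      show ((lrM (e : WithOne S) (f : WithOne S) Z (k+1)).1 * Z (k+2) *
              (lrM (e : WithOne S) (f : WithOne S) Z (k+1)).2,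
            (lrM (e : WithOne S) (f : WithOne S) Z (k+1)).2 * Z (k+2) *
              (lrM (e : WithOne S) (f : WithOne S) Z (k+1)).1) = _
      rw [hpq, hZ (k+2)]
    rcases ih with ih | ih
    · right
      rw [step _ _ ih, mul_one, mul_one, ← WithOne.coe_mul, ← WithOne.coe_mul, hfe, hef]
    · left
      rw [step _ _ ih, mul_one, mul_one, ← WithOne.coe_mul, ← WithOne.coe_mul, hef, hfe]

theorem IsNT.cancel_fe {S : Type*} [Semigroup S] (h : IsNT S) {e f : S}
    (hef : e * f = f) (hfe : f * e = e) : e = f := by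
  obtain ⟨n, hn, hid⟩ := h
  have key := hid e f fun _ => 1
  rw [lrho_eq_lrM] at key
  obtain ⟨k, rfl⟩ : ∃ k, n = k + 1 := ⟨n - 1, by omega⟩
  have key' : (lrM (e : WithOne S) (f : WithOne S) (fun i => if i = 1 then 1 else 1) (k+1)).1 =
      (lrM (e : WithOne S) (f : WithOne S) (fun i => if i = 1 then 1 else 1) (k+1)).2 := key
  rcases lrM_swap hef hfe (fun i => if i = 1 then 1 else 1) (fun i => ite_self 1) k
      with hh | hh <;> rw [hh] at key'
  · exact (WithOne.coe_inj.mp key').symm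
  · exact WithOne.coe_inj.mp key'

theorem IsNT.blockGroup {S : Type*} [Semigroup S] (h : IsNT S) : IsBlockGroup S := by
  rintro s x y ⟨h1, h2⟩ ⟨h3, h4⟩
  have hxs : x * s = y * s := h.cancel_ef
    (by rw [mul_assoc x s (y * s), ← mul_assoc s y s, h3])
    (by rw [mul_assoc y s (x * s), ← mul_assoc s x s, h1])
  have hsx : s * x = s * y := h.cancel_fe
    (by rw [← mul_assoc (s * x) s y, mul_assoc s x s, ← mul_assoc s x s, h1])
    (by rw [← mul_assoc (s * y) s x, mul_assoc s y s, ← mul_assoc s y s, h3])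
  calc x = x * s * x := h2.symm
    _ = y * s * x := by rw [hxs]
    _ = y * (s * x) := mul_assoc y s x
    _ = y * (s * y) := by rw [hsx]
    _ = y * s * y := (mul_assoc y s y).symm
    _ = y := h4

open scoped commutatorElement

def itc {G : Type*} [Group G] (x : G) (g : ℕ → G) : ℕ → G
  | 0 => x
  | k + 1 => ⁅itc x g k, g (k + 1)⁆

theorem itc_congr {G : Type*} [Group G] (x : G) (g g' : ℕ → G) :
    ∀ m, (∀ i, i ≤ m → g i = g' i) → itc x g m = itc x g' m
  | 0, _ => rfl
  | m + 1, h => by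
    rw [itc, itc, itc_congr x g g' m (fun i hi => h i (Nat.le_succ_of_le hi)), h (m+1) le_rfl]

theorem itc_hom {G H : Type*} [Group G] [Group H] (φ : G →* H) (x : G) (g : ℕ → G) :
    ∀ m, φ (itc x g m) = itc (φ x) (fun i => φ (g i)) m
  | 0 => rfl
  | m + 1 => by rw [itc, itc, map_commutatorElement, itc_hom φ x g m]

theorem nilpotent_of_itc : ∀ (m : ℕ) (G : Type) [Group G],
    (∀ (a b : G) (g : ℕ → G), itc ⁅a, b⁆ g m = 1) → Group.IsNilpotent G := by
  intro m
  induction m with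
  | zero =>
    intro G _ H
    rw [nilpotent_iff_lowerCentralSeries]
    refine ⟨1, ?_⟩
    rw [lowerCentralSeries_one, commutator_def, eq_bot_iff]
    exact Subgroup.commutator_le.mpr fun a _ b _ => Subgroup.mem_bot.mpr (H a b fun _ => 1)
  | succ m ih =>
    intro G _ H
    apply of_quotient_center_nilpotent
    apply ih
    intro a b g
    obtain ⟨a', rfl⟩ := QuotientGroup.mk'_surjective (Subgroup.center G) a
    obtain ⟨b', rfl⟩ := QuotientGroup.mk'_surjective (Subgroup.center G) b
    choose g' hg' using fun i => QuotientGroup.mk'_surjective (Subgroup.center G) (g i)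
    have hg : g = fun i => QuotientGroup.mk' (Subgroup.center G) (g' i) :=
      funext fun i => (hg' i).symm
    rw [hg, ← map_commutatorElement, ← itc_hom]
    refine (QuotientGroup.eq_one_iff _).mpr ?_
    rw [Subgroup.mem_center_iff]
    intro t
    have hH := H a' b' (fun i => if i = m + 1 then t else g' i)
    rw [itc, itc_congr ⁅a', b'⁆ _ g' m (fun i hi => if_neg (by omega)), if_pos rfl] at hH
    exact (commutatorElement_eq_one_iff_mul_comm.mp hH).symm

theorem lrM_coe_f {G S : Type*} [Group G] [Semigroup S] (f : G →ₙ* S) (a b : G) (t : ℕ → G) :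
    ∀ k, lrM ((f a : S) : WithOne S) ((f b : S) : WithOne S)
        (fun i => if i = 1 then 1 else ((f (t i) : S) : WithOne S)) (k + 1)
      = (↑(f ((lrM a b (fun i => if i = 1 then 1 else t i) (k + 1)).1)),
         ↑(f ((lrM a b (fun i => if i = 1 then 1 else t i) (k + 1)).2))) := by
  intro k
  induction k with
  | zero =>
    show (((f a : S) : WithOne S) * (if (1:ℕ) = 1 then 1 else _) * (f b : S),
          ((f b : S) : WithOne S) * (if (1:ℕ) = 1 then 1 else _) * (f a : S)) = _
    rw [if_pos rfl, mul_one, mul_one, ← WithOne.coe_mul, ← WithOne.coe_mul, ← map_mul, ← map_mul]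
    show _ = (((f (a * (if (1:ℕ) = 1 then 1 else _) * b) : S) : WithOne S),
              ((f (b * (if (1:ℕ) = 1 then 1 else _) * a) : S) : WithOne S))
    rw [if_pos rfl, mul_one, mul_one]
  | succ k ih =>
    have hne : (k + 1 + 1 : ℕ) ≠ 1 := by omega
    show (_ * (if (k + 1 + 1 : ℕ) = 1 then 1 else ((f (t (k+1+1)) : S) : WithOne S)) * _,
          _ * (if (k + 1 + 1 : ℕ) = 1 then 1 else ((f (t (k+1+1)) : S) : WithOne S)) * _) = _
    rw [ih, if_neg hne]
    show ((((f ((lrM a b (fun i => if i = 1 then 1 else t i) (k + 1)).1) : S) : WithOne S)) *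
            ((f (t (k+1+1)) : S) : WithOne S) *
            ((f ((lrM a b (fun i => if i = 1 then 1 else t i) (k + 1)).2) : S) : WithOne S),
          (((f ((lrM a b (fun i => if i = 1 then 1 else t i) (k + 1)).2) : S) : WithOne S)) *
            ((f (t (k+1+1)) : S) : WithOne S) *
            ((f ((lrM a b (fun i => if i = 1 then 1 else t i) (k + 1)).1) : S) : WithOne S)) = _
    rw [← WithOne.coe_mul, ← WithOne.coe_mul, ← WithOne.coe_mul, ← WithOne.coe_mul,
      ← map_mul, ← map_mul, ← map_mul, ← map_mul]
    show _ = ((((f ((lrM a b (fun i => if i = 1 then 1 else t i) (k+1)).1 *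
        (if (k + 1 + 1 : ℕ) = 1 then 1 else t (k+1+1)) *
        (lrM a b (fun i => if i = 1 then 1 else t i) (k+1)).2) : S) : WithOne S)),
      (((f ((lrM a b (fun i => if i = 1 then 1 else t i) (k+1)).2 *
        (if (k + 1 + 1 : ℕ) = 1 then 1 else t (k+1+1)) *
        (lrM a b (fun i => if i = 1 then 1 else t i) (k+1)).1) : S) : WithOne S)))
    rw [if_neg hne]

def auxP {G : Type*} [Group G] (a b : G) (s : ℕ → G) : ℕ → G × G
  | 0 => (a, b)
  | 1 => (a * b, b * a)
  | k + 2 =>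
    ((auxP a b s (k+1)).1 * ((auxP a b s (k+1)).2⁻¹ * s (k+2)) * (auxP a b s (k+1)).2,
     s (k+2) * (auxP a b s (k+1)).1)

def tP {G : Type*} [Group G] (a b : G) (s : ℕ → G) : ℕ → G
  | 0 => 1
  | 1 => 1
  | k + 2 => (auxP a b s (k+1)).2⁻¹ * s (k+2)

theorem lrM_eq_auxP {G : Type*} [Group G] (a b : G) (s : ℕ → G) :
    ∀ k, lrM a b (fun i => if i = 1 then 1 else tP a b s i) k = auxP a b s k := by
  intro k
  induction k with
  | zero => rfl
  | succ k ih =>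
    rcases k with _ | j
    · show (a * (if (1:ℕ) = 1 then 1 else tP a b s 1) * b,
            b * (if (1:ℕ) = 1 then 1 else tP a b s 1) * a) = (a * b, b * a)
      rw [if_pos rfl, mul_one, mul_one]
    · have hne : (j + 1 + 1 : ℕ) ≠ 1 := by omega
      show ((lrM a b (fun i => if i = 1 then 1 else tP a b s i) (j+1)).1 *
              (if (j + 1 + 1 : ℕ) = 1 then 1 else tP a b s (j+1+1)) *
              (lrM a b (fun i => if i = 1 then 1 else tP a b s i) (j+1)).2,
            (lrM a b (fun i => if i = 1 then 1 else tP a b s i) (j+1)).2 *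
              (if (j + 1 + 1 : ℕ) = 1 then 1 else tP a b s (j+1+1)) *
              (lrM a b (fun i => if i = 1 then 1 else tP a b s i) (j+1)).1) = auxP a b s (j+2)
      rw [ih, if_neg hne]
      show ((auxP a b s (j+1)).1 * ((auxP a b s (j+1)).2⁻¹ * s (j+2)) * (auxP a b s (j+1)).2,
            (auxP a b s (j+1)).2 * ((auxP a b s (j+1)).2⁻¹ * s (j+2)) * (auxP a b s (j+1)).1)
          = ((auxP a b s (j+1)).1 * ((auxP a b s (j+1)).2⁻¹ * s (j+2)) * (auxP a b s (j+1)).2,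
             s (j+2) * (auxP a b s (j+1)).1)
      rw [Prod.mk.injEq]
      refine ⟨rfl, ?_⟩
      group

theorem auxP_comm {G : Type*} [Group G] (a b : G) (s : ℕ → G) :
    ∀ k, (auxP a b s (k+1)).1 = itc ⁅a, b⁆ (fun j => s (j+1)) k * (auxP a b s (k+1)).2 := by
  intro k
  induction k with
  | zero =>
    show a * b = ⁅a, b⁆ * (b * a)
    group
  | succ k ih =>
    show (auxP a b s (k+1)).1 * ((auxP a b s (k+1)).2⁻¹ * s (k+2)) * (auxP a b s (k+1)).2
        = ⁅itc ⁅a, b⁆ (fun j => s (j+1)) k, s (k+2)⁆ * (s (k+2) * (auxP a b s (k+1)).1)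
    rw [ih]
    group

theorem IsNT.nilpotent {S : Type*} [Semigroup S] (h : IsNT S)
    (G : Type) [Group G] (f : G →ₙ* S) (hf : Function.Injective f) : Group.IsNilpotent G := by
  obtain ⟨n, hn, hid⟩ := h
  have hG : ∀ (a b : G) (t : ℕ → G),
      (lrM a b (fun i => if i = 1 then 1 else t i) n).1 =
      (lrM a b (fun i => if i = 1 then 1 else t i) n).2 := by
    intro a b t
    have key := hid (f a) (f b) fun i => ((f (t i) : S) : WithOne S)
    rw [lrho_eq_lrM] at key
    obtain ⟨k, rfl⟩ : ∃ k, n = k + 1 := ⟨n - 1, by omega⟩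
    rw [lrM_coe_f f a b t k] at key
    exact hf (WithOne.coe_inj.mp key)
  apply nilpotent_of_itc (n - 1) G
  intro x y g
  have h1 := hG x y (tP x y (fun j => g (j - 1)))
  obtain ⟨k, hk⟩ : ∃ k, n = k + 1 := ⟨n - 1, by omega⟩
  rw [hk, lrM_eq_auxP x y (fun j => g (j - 1)) (k+1)] at h1
  have h2 := auxP_comm x y (fun j => g (j - 1)) k
  rw [h1] at h2
  have h3 : itc ⁅x, y⁆ (fun j => (fun j' => g (j' - 1)) (j+1)) k = 1 :=
    mul_right_cancel (h2.symm.trans (one_mul _).symm)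
  have hnk : n - 1 = k := by omega
  rw [hnk]
  exact h3

theorem cycle_main {S : Type*} [Semigroup S] {a b p q p' q' : S} {ce co : WithOne S}
    (hab : a * b = p) (hba : b * a = q)
    (hs1 : (p : WithOne S) * ce * q = ↑p') (hs2 : (q : WithOne S) * ce * p = ↑q')
    (hs3 : (p' : WithOne S) * co * q' = ↑p) (hs4 : (q' : WithOne S) * co * p' = ↑q)
    (Z : ℕ → WithOne S) (hZ1 : Z 1 = 1)
    (hZe : ∀ i, i ≠ 1 → i % 2 = 0 → Z i = ce)
    (hZo : ∀ i, i ≠ 1 → i % 2 ≠ 0 → Z i = co) :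
    ∀ k, lrM (a : WithOne S) (b : WithOne S) Z (2*k+1) = (↑p, ↑q) ∧
      lrM (a : WithOne S) (b : WithOne S) Z (2*k+2) = (↑p', ↑q') := by
  have step : ∀ k (u v : WithOne S), lrM (a : WithOne S) (b : WithOne S) Z k = (u, v) →
      lrM (a : WithOne S) (b : WithOne S) Z (k + 1) = (u * Z (k+1) * v, v * Z (k+1) * u) := by
    intro k u v hk
    show ((lrM (a : WithOne S) (b : WithOne S) Z k).1 * Z (k+1) *
            (lrM (a : WithOne S) (b : WithOne S) Z k).2,
          (lrM (a : WithOne S) (b : WithOne S) Z k).2 * Z (k+1) *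
            (lrM (a : WithOne S) (b : WithOne S) Z k).1) = _
    rw [hk]
  intro k
  induction k with
  | zero =>
    have h1 := step 0 ↑a ↑b rfl
    rw [show Z (0+1) = 1 from hZ1, mul_one, mul_one, ← WithOne.coe_mul, ← WithOne.coe_mul,
      hab, hba] at h1
    have h2 := step (0+1) ↑p ↑q h1
    rw [hZe (0+1+1) (by omega) (by omega), hs1, hs2] at h2
    exact ⟨h1, h2⟩
  | succ k ih =>
    have h3 := step (2*k+2) ↑p' ↑q' ih.2
    rw [hZo (2*k+2+1) (by omega) (by omega), hs3, hs4] at h3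
    have h4 := step (2*k+2+1) ↑p ↑q h3
    rw [hZe (2*k+2+1+1) (by omega) (by omega), hs1, hs2] at h4
    exact ⟨h3, h4⟩

theorem not_isNT_of_cycle {S : Type*} [Semigroup S] {a b p q p' q' : S} {ce co : WithOne S}
    (hab : a * b = p) (hba : b * a = q)
    (hs1 : (p : WithOne S) * ce * q = ↑p') (hs2 : (q : WithOne S) * ce * p = ↑q')
    (hs3 : (p' : WithOne S) * co * q' = ↑p) (hs4 : (q' : WithOne S) * co * p' = ↑q)
    (hpq : p ≠ q) (hpq' : p' ≠ q') : ¬ IsNT S := by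
  rintro ⟨n, hn, hid⟩
  have key0 := hid a b fun i => if i % 2 = 0 then ce else co
  rw [lrho_eq_lrM] at key0
  have key : (lrM (a : WithOne S) (b : WithOne S)
      (fun i => if i = 1 then 1 else if i % 2 = 0 then ce else co) n).1 =
      (lrM (a : WithOne S) (b : WithOne S)
      (fun i => if i = 1 then 1 else if i % 2 = 0 then ce else co) n).2 := key0
  have main := cycle_main hab hba hs1 hs2 hs3 hs4
    (fun i => if i = 1 then 1 else if i % 2 = 0 then ce else co)
    (by simp)
    (fun i h1 h2 => by simp only [if_neg h1, if_pos h2])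
    (fun i h1 h2 => by simp only [if_neg h1, if_neg h2])
  rcases Nat.even_or_odd n with he | ho
  · obtain ⟨j, hj⟩ := he
    have hk : n = 2*(j-1)+2 := by omega
    rw [hk, (main (j-1)).2] at key
    exact hpq' (WithOne.coe_inj.mp key)
  · obtain ⟨j, hj⟩ := ho
    rw [hj, (main j).1] at key
    exact hpq (WithOne.coe_inj.mp key)

theorem not_isNT_F7 : ¬ IsNT F7 := by
  refine not_isNT_of_cycle (a := F7.e12) (b := F7.e21) (p := F7.e11) (q := F7.e22)
    (p' := F7.e12) (q' := F7.e21) (ce := (F7.u : WithOne F7)) (co := 1)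
    (by decide) (by decide) ?_ ?_ ?_ ?_ (by decide) (by decide)
  · rw [← WithOne.coe_mul, ← WithOne.coe_mul]
    exact congrArg _ (by decide)
  · rw [← WithOne.coe_mul, ← WithOne.coe_mul]
    exact congrArg _ (by decide)
  · rw [mul_one, ← WithOne.coe_mul]
    exact congrArg _ (by decide)
  · rw [mul_one, ← WithOne.coe_mul]
    exact congrArg _ (by decide)

def mkF12 (x : Tr4) (hx : x ∈ F12list) : ↥F12 := ⟨x, hx⟩

def a12 : ↥F12 := mkF12 (eT 1 2) (by decide)
def b12 : ↥F12 := mkF12 w2T (by decide)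
def p12 : ↥F12 := mkF12 (eT 1 0) (by decide)
def q12 : ↥F12 := mkF12 (eT 0 2) (by decide)
def p12' : ↥F12 := mkF12 (eT 1 2) (by decide)
def q12' : ↥F12 := mkF12 (eT 0 0) (by decide)
def ce12 : ↥F12 := mkF12 w1T (by decide)
def co12 : ↥F12 := mkF12 w2T (by decide)

theorem not_isNT_F12 : ¬ IsNT (↥F12) := by
  refine not_isNT_of_cycle (a := a12) (b := b12) (p := p12) (q := q12)
    (p' := p12') (q' := q12')
    (ce := (ce12 : WithOne ↥F12)) (co := (co12 : WithOne ↥F12))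
    (Subtype.ext (by decide)) (Subtype.ext (by decide)) ?_ ?_ ?_ ?_
    (fun hh => absurd (congrArg Subtype.val hh) (by decide))
    (fun hh => absurd (congrArg Subtype.val hh) (by decide)) <;>
  · rw [← WithOne.coe_mul, ← WithOne.coe_mul]
    exact congrArg _ (Subtype.ext (by decide))

/-- Every finite Neumann–Taylor semigroup is in NDF₁₂. -/
theorem isNT_isNDF12 (S : Type*) [Semigroup S] [Finite S] (h : IsNT S) :
    IsNDF12 S := by
  exact ⟨⟨h.blockGroup, fun G _ _ f hf => h.nilpotent G f hf⟩,
    fun hd => not_isNT_F7 (h.of_divides hd), fun hd => not_isNT_F12 (h.of_divides hd)⟩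
end

section
/- Let S be a finite semigroup. If every subsemigroup of S generated by at most 3 elements is in NDF₁₂, then S is in NDF₁₂. -/
open Subgroup in
private lemma pow_mem_semiclosure {G : Type*} [Monoid G] {s : Set G} {x : G}
    (hx : x ∈ Subsemigroup.closure s) : ∀ n, x ^ (n + 1) ∈ Subsemigroup.closure s := by
  intro n
  induction n with
  | zero => simpa using hx
  | succ k ih => rw [pow_succ]; exact Subsemigroup.mul_mem _ ih hx

private lemma subgroup_le_semiclosure {G : Type*} [Group G] [Finite G] {s : Set G}
    (hs : s.Nonempty) {g : G} (hg : g ∈ Subgroup.closure s) : g ∈ Subsemigroup.closure s := by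
  induction hg using Subgroup.closure_induction with
  | mem x hx => exact Subsemigroup.subset_closure hx
  | one =>
    obtain ⟨x, hx⟩ := hs
    have hx' := Subsemigroup.subset_closure hx
    obtain ⟨m, hm⟩ := Nat.exists_eq_succ_of_ne_zero (orderOf_pos x).ne'
    rw [← pow_orderOf_eq_one x, hm]
    exact pow_mem_semiclosure hx' m
  | mul a b _ _ ha hb => exact Subsemigroup.mul_mem _ ha hb
  | inv a _ ha =>
    rcases Nat.lt_or_ge (orderOf a) 2 with h2 | h2
    · interval_cases h : orderOf a
      · exact absurd h (orderOf_pos a).ne'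
      · have : a = 1 := orderOf_eq_one_iff.mp h
        simpa [this] using ha
    · obtain ⟨k, hk⟩ := Nat.exists_eq_add_of_le h2
      have : a * a ^ (k + 1) = 1 := by
        rw [← pow_succ', show k + 1 + 1 = orderOf a by omega]; exact pow_orderOf_eq_one a
      rw [inv_eq_of_mul_eq_one_right this]
      exact pow_mem_semiclosure ha k

private lemma mem_pair_closure_left {G : Type*} [Group G] (x y : G) :
    x ∈ Subgroup.closure {x, y} := Subgroup.subset_closure (by simp)

private lemma mem_pair_closure_right {G : Type*} [Group G] (x y : G) :
    y ∈ Subgroup.closure {x, y} := Subgroup.subset_closure (by simp)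

private lemma pgroup_closure_pair {G : Type*} [Group G] [Finite G] {p : ℕ} [Fact p.Prime]
    {x y : G} (hnil : Group.IsNilpotent ↥(Subgroup.closure {x, y}))
    (hx : ∃ n, x ^ p ^ n = 1) (hy : ∃ n, y ^ p ^ n = 1) :
    IsPGroup p ↥(Subgroup.closure {x, y}) := by
  set H := Subgroup.closure {x, y} with hH
  obtain ⟨Q⟩ : Nonempty (Sylow p ↥H) := Sylow.nonempty
  have htfae : Group.IsNilpotent ↥H ↔
      ∀ (q : ℕ) (_ : Fact q.Prime) (P : Sylow q ↥H), (↑P : Subgroup ↥H).Normal :=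
    (isNilpotent_of_finite_tfae).out 0 3
  have hQn : (Q : Subgroup ↥H).Normal := htfae.mp hnil p ‹_› Q
  have key : ∀ (g : G) (hgH : g ∈ H), (∃ n, g ^ p ^ n = 1) →
      (⟨g, hgH⟩ : ↥H) ∈ (Q : Subgroup ↥H) := by
    rintro g hgH ⟨n, hgn⟩
    set gH : ↥H := ⟨g, hgH⟩ with hgHdef
    have h1 : orderOf gH ∣ p ^ n :=
      orderOf_dvd_of_pow_eq_one (by ext; simpa using hgn)
    have h2 : orderOf (QuotientGroup.mk' (Q : Subgroup ↥H) gH) ∣ p ^ n :=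
      (orderOf_map_dvd _ gH).trans h1
    have h3 : orderOf (QuotientGroup.mk' (Q : Subgroup ↥H) gH) ∣ (Q : Subgroup ↥H).index := by
      simpa [Subgroup.index] using orderOf_dvd_natCard (QuotientGroup.mk' (Q : Subgroup ↥H) gH)
    obtain ⟨k, hk, hkeq⟩ := (Nat.dvd_prime_pow Fact.out).mp h2
    rcases Nat.eq_zero_or_pos k with rfl | hkpos
    · have : QuotientGroup.mk' (Q : Subgroup ↥H) gH = 1 :=
        orderOf_eq_one_iff.mp (by simpa using hkeq)
      rwa [← QuotientGroup.ker_mk' (Q : Subgroup ↥H), MonoidHom.mem_ker]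
    · exfalso
      exact Q.not_dvd_index (dvd_trans (hkeq ▸ dvd_pow_self p hkpos.ne') h3)
  have hxQ : (⟨x, mem_pair_closure_left x y⟩ : ↥H) ∈ (Q : Subgroup ↥H) :=
    key x _ hx
  have hyQ : (⟨y, mem_pair_closure_right x y⟩ : ↥H) ∈ (Q : Subgroup ↥H) :=
    key y _ hy
  have htop : (⊤ : Subgroup ↥H) ≤ (Q : Subgroup ↥H) := by
    rw [← Subgroup.closure_closure_coe_preimage (k := ({x, y} : Set G))]
    refine Subgroup.closure_le _ |>.mpr ?_
    rintro ⟨z, hz⟩ (hz' : z ∈ ({x, y} : Set G))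
    rcases hz' with rfl | hz'
    · exact hxQ
    · rcases hz' with rfl
      exact hyQ
  intro g
  obtain ⟨n, hn⟩ := Q.isPGroup' ⟨g, htop (Subgroup.mem_top g)⟩
  exact ⟨n, by simpa [Subtype.ext_iff] using hn⟩

private lemma nilpotent_of_two_gen (G : Type*) [Group G] [Finite G]
    (h : ∀ x y : G, Group.IsNilpotent ↥(Subgroup.closure {x, y})) : Group.IsNilpotent G := by
  have htfae : Group.IsNilpotent G ↔
      ∀ (q : ℕ) (_ : Fact q.Prime) (P : Sylow q G), (↑P : Subgroup G).Normal :=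
    (isNilpotent_of_finite_tfae).out 0 3
  refine htfae.mpr ?_
  intro p hp P
  let N : Subgroup G :=
    { carrier := {g | ∃ n, g ^ p ^ n = 1}
      one_mem' := ⟨0, one_pow _⟩
      inv_mem' := by rintro a ⟨n, hn⟩; exact ⟨n, by rw [inv_pow, hn, inv_one]⟩
      mul_mem' := by
        rintro a b ha hb
        have hpg := pgroup_closure_pair (h a b) ha hb
        have hab : a * b ∈ Subgroup.closure {a, b} :=
          mul_mem (mem_pair_closure_left a b) (mem_pair_closure_right a b)
        obtain ⟨n, hn⟩ := hpg ⟨a * b, hab⟩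
        exact ⟨n, by simpa [Subtype.ext_iff] using hn⟩ }
  have hNnormal : N.Normal := by
    constructor
    rintro g ⟨n, hn⟩ c
    exact ⟨n, by rw [conj_pow, hn, mul_one, mul_inv_cancel]⟩
  have hPN : (P : Subgroup G) ≤ N := by
    intro g hg
    obtain ⟨n, hn⟩ := P.isPGroup' ⟨g, hg⟩
    exact ⟨n, by simpa [Subtype.ext_iff] using hn⟩
  have hNp : IsPGroup p ↥N := by
    rintro ⟨g, n, hn⟩
    exact ⟨n, by simpa [Subtype.ext_iff] using hn⟩
  have hNe : N = ↑P := P.is_maximal' hNp hPN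
  rw [← hNe]
  exact hNnormal

section MainProof

private lemma mem_F12_w1 : w1T ∈ F12 := by
  show w1T ∈ F12list; decide

private lemma mem_F12_w2 : w2T ∈ F12 := by
  show w2T ∈ F12list; decide

private lemma mem_F12_e12 : eT 1 2 ∈ F12 := by
  show eT 1 2 ∈ F12list; decide

/-- If every subsemigroup of a finite semigroup S generated by at most 3
elements is in NDF₁₂, then S is in NDF₁₂. -/
theorem isNDF12_of_three_generated (S : Type*) [Semigroup S] [Finite S]
    (h : ∀ A : Finset S, A.card ≤ 3 →
      IsNDF12 (Subsemigroup.closure (A : Set S))) :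
    IsNDF12 S := by
  classical
  refine ⟨⟨?_, ?_⟩, ?_, ?_⟩
  · -- block group
    intro s x y hx hy
    set A : Finset S := {s, x, y} with hA
    have hcard : A.card ≤ 3 := by
      have h1 := Finset.card_insert_le s ({x, y} : Finset S)
      have h2 := Finset.card_insert_le x ({y} : Finset S)
      have h3 : ({y} : Finset S).card = 1 := Finset.card_singleton y
      rw [hA]; omega
    obtain ⟨⟨hBG, _⟩, _, _⟩ := h A hcard
    have hs : s ∈ Subsemigroup.closure (A : Set S) :=
      Subsemigroup.subset_closure (by simp [hA])
    have hx' : x ∈ Subsemigroup.closure (A : Set S) :=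
      Subsemigroup.subset_closure (by simp [hA])
    have hy' : y ∈ Subsemigroup.closure (A : Set S) :=
      Subsemigroup.subset_closure (by simp [hA])
    have := hBG ⟨s, hs⟩ ⟨x, hx'⟩ ⟨y, hy'⟩
      ⟨Subtype.ext hx.1, Subtype.ext hx.2⟩ ⟨Subtype.ext hy.1, Subtype.ext hy.2⟩
    exact congrArg Subtype.val this
  · -- nilpotent groups
    intro G _ _ f hf
    refine nilpotent_of_two_gen G ?_
    intro x y
    set A : Finset S := {f x, f y} with hA
    have hcard : A.card ≤ 3 := by
      have h1 := Finset.card_insert_le (f x) ({f y} : Finset S)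
      have h3 : ({f y} : Finset S).card = 1 := Finset.card_singleton (f y)
      rw [hA]; omega
    obtain ⟨⟨_, hG⟩, _, _⟩ := h A hcard
    have hmap : ∀ g ∈ Subgroup.closure ({x, y} : Set G),
        f g ∈ Subsemigroup.closure (A : Set S) := by
      intro g hg
      have hg' : g ∈ Subsemigroup.closure ({x, y} : Set G) :=
        subgroup_le_semiclosure ⟨x, by simp⟩ hg
      clear hg
      induction hg' using Subsemigroup.closure_induction with
      | mem z hz =>
        rcases hz with rfl | hz
        · exact Subsemigroup.subset_closure (by simp [hA])
        · rcases hz with rfl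
          exact Subsemigroup.subset_closure (by simp [hA])
      | mul a b _ _ ha hb => rw [map_mul]; exact Subsemigroup.mul_mem _ ha hb
    let φ : ↥(Subgroup.closure ({x, y} : Set G)) →ₙ* ↥(Subsemigroup.closure (A : Set S)) :=
      { toFun := fun k => ⟨f k.1, hmap k.1 k.2⟩
        map_mul' := fun a b => Subtype.ext (map_mul f a.1 b.1) }
    have hinj : Function.Injective φ := by
      intro a b hab
      exact Subtype.ext (hf (congrArg Subtype.val hab))
    exact hG ↥(Subgroup.closure ({x, y} : Set G)) φ hinj
  · -- no F7 division
    rintro ⟨U, f, hsurj⟩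
    obtain ⟨a, ha⟩ := hsurj F7.u
    obtain ⟨b, hb⟩ := hsurj F7.e11
    set A : Finset S := {(a : S), (b : S)} with hA
    have hcard : A.card ≤ 3 := by
      have h1 := Finset.card_insert_le (a : S) ({(b : S)} : Finset S)
      have h3 : ({(b : S)} : Finset S).card = 1 := Finset.card_singleton (b : S)
      rw [hA]; omega
    have hTU : Subsemigroup.closure (A : Set S) ≤ U := by
      refine Subsemigroup.closure_le.mpr ?_
      intro z hz
      simp only [hA, Finset.coe_insert, Finset.coe_singleton, Set.mem_insert_iff,
        Set.mem_singleton_iff] at hz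
      rcases hz with rfl | rfl
      exacts [a.2, b.2]
    let g : ↥(Subsemigroup.closure (A : Set S)) →ₙ* F7 :=
      { toFun := fun t => f ⟨t.1, hTU t.2⟩
        map_mul' := fun t t' => map_mul f ⟨t.1, hTU t.2⟩ ⟨t'.1, hTU t'.2⟩ }
    have haT : (a : S) ∈ Subsemigroup.closure (A : Set S) :=
      Subsemigroup.subset_closure (by simp [hA])
    have hbT : (b : S) ∈ Subsemigroup.closure (A : Set S) :=
      Subsemigroup.subset_closure (by simp [hA])
    set a' : ↥(Subsemigroup.closure (A : Set S)) := ⟨(a : S), haT⟩ with ha'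
    set b' : ↥(Subsemigroup.closure (A : Set S)) := ⟨(b : S), hbT⟩ with hb'
    have hga : g a' = F7.u := ha
    have hgb : g b' = F7.e11 := hb
    have hgsurj : Function.Surjective g := by
      intro z
      cases z with
      | th => exact ⟨b' * a' * b', by rw [map_mul, map_mul, hga, hgb]; rfl⟩
      | one => exact ⟨a' * a', by rw [map_mul, hga]; rfl⟩
      | u => exact ⟨a', hga⟩
      | e11 => exact ⟨b', hgb⟩
      | e12 => exact ⟨b' * a', by rw [map_mul, hga, hgb]; rfl⟩
      | e21 => exact ⟨a' * b', by rw [map_mul, hga, hgb]; rfl⟩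
      | e22 => exact ⟨a' * b' * a', by rw [map_mul, map_mul, hga, hgb]; rfl⟩
    let g' : (⊤ : Subsemigroup ↥(Subsemigroup.closure (A : Set S))) →ₙ* F7 :=
      { toFun := fun t => g t.1
        map_mul' := fun t t' => map_mul g t.1 t'.1 }
    refine (h A hcard).2.1 ⟨⊤, g', ?_⟩
    intro z
    obtain ⟨t, ht⟩ := hgsurj z
    exact ⟨⟨t, Subsemigroup.mem_top t⟩, ht⟩
  · -- no F12 division
    rintro ⟨U, f, hsurj⟩
    obtain ⟨a, ha⟩ := hsurj ⟨w1T, mem_F12_w1⟩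
    obtain ⟨b, hb⟩ := hsurj ⟨w2T, mem_F12_w2⟩
    obtain ⟨c, hc⟩ := hsurj ⟨eT 1 2, mem_F12_e12⟩
    set A : Finset S := {(a : S), (b : S), (c : S)} with hA
    have hcard : A.card ≤ 3 := by
      have h1 := Finset.card_insert_le (a : S) ({(b : S), (c : S)} : Finset S)
      have h2 := Finset.card_insert_le (b : S) ({(c : S)} : Finset S)
      have h3 : ({(c : S)} : Finset S).card = 1 := Finset.card_singleton (c : S)
      rw [hA]; omega
    have hTU : Subsemigroup.closure (A : Set S) ≤ U := by
      refine Subsemigroup.closure_le.mpr ?_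
      intro z hz
      simp only [hA, Finset.coe_insert, Finset.coe_singleton, Set.mem_insert_iff,
        Set.mem_singleton_iff] at hz
      rcases hz with rfl | rfl | rfl
      exacts [a.2, b.2, c.2]
    let g : ↥(Subsemigroup.closure (A : Set S)) →ₙ* ↥F12 :=
      { toFun := fun t => f ⟨t.1, hTU t.2⟩
        map_mul' := fun t t' => map_mul f ⟨t.1, hTU t.2⟩ ⟨t'.1, hTU t'.2⟩ }
    have haT : (a : S) ∈ Subsemigroup.closure (A : Set S) :=
      Subsemigroup.subset_closure (by simp [hA])
    have hbT : (b : S) ∈ Subsemigroup.closure (A : Set S) :=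
      Subsemigroup.subset_closure (by simp [hA])
    have hcT : (c : S) ∈ Subsemigroup.closure (A : Set S) :=
      Subsemigroup.subset_closure (by simp [hA])
    set a' : ↥(Subsemigroup.closure (A : Set S)) := ⟨(a : S), haT⟩ with ha'
    set b' : ↥(Subsemigroup.closure (A : Set S)) := ⟨(b : S), hbT⟩ with hb'
    set c' : ↥(Subsemigroup.closure (A : Set S)) := ⟨(c : S), hcT⟩ with hc'
    have hga : g a' = ⟨w1T, mem_F12_w1⟩ := ha
    have hgb : g b' = ⟨w2T, mem_F12_w2⟩ := hb
    have hgc : g c' = ⟨eT 1 2, mem_F12_e12⟩ := hc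
    have hgsurj : Function.Surjective g := by
      intro z
      have hz : z.1 ∈ F12list := z.2
      simp only [F12list, List.mem_cons, List.not_mem_nil, or_false] at hz
      rcases hz with hz | hz | hz | hz | hz | hz | hz | hz | hz | hz | hz | hz
      · exact ⟨a' * a' * c', by
          rw [map_mul, map_mul, hga, hgc]; exact Subtype.ext (by rw [hz]; decide)⟩
      · exact ⟨a' * a', by
          rw [map_mul, hga]; exact Subtype.ext (by rw [hz]; decide)⟩
      · exact ⟨a' * b', by
          rw [map_mul, hga, hgb]; exact Subtype.ext (by rw [hz]; decide)⟩
      · exact ⟨a' * b' * c', by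
          rw [map_mul, map_mul, hga, hgb, hgc]; exact Subtype.ext (by rw [hz]; decide)⟩
      · exact ⟨c' * b', by
          rw [map_mul, hgc, hgb]; exact Subtype.ext (by rw [hz]; decide)⟩
      · exact ⟨c' * a', by
          rw [map_mul, hgc, hga]; exact Subtype.ext (by rw [hz]; decide)⟩
      · exact ⟨c', by rw [hgc]; exact Subtype.ext hz.symm⟩
      · exact ⟨b' * a', by
          rw [map_mul, hgb, hga]; exact Subtype.ext (by rw [hz]; decide)⟩
      · exact ⟨b' * b', by
          rw [map_mul, hgb]; exact Subtype.ext (by rw [hz]; decide)⟩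
      · exact ⟨b' * b' * c', by
          rw [map_mul, map_mul, hgb, hgc]; exact Subtype.ext (by rw [hz]; decide)⟩
      · exact ⟨a', by rw [hga]; exact Subtype.ext hz.symm⟩
      · exact ⟨b', by rw [hgb]; exact Subtype.ext hz.symm⟩
    let g' : (⊤ : Subsemigroup ↥(Subsemigroup.closure (A : Set S))) →ₙ* ↥F12 :=
      { toFun := fun t => g t.1
        map_mul' := fun t t' => map_mul g t.1 t'.1 }
    refine (h A hcard).2.2 ⟨⊤, g', ?_⟩
    intro z
    obtain ⟨t, ht⟩ := hgsurj z
    exact ⟨⟨t, Subsemigroup.mem_top t⟩, ht⟩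

end MainProof
end

section
/- Every finite aperiodic inverse semigroup is Mal'cev nilpotent. -/
/-- Auxiliary: monoid with a unique-inverse operation. -/
structure MyInv (M : Type*) [Monoid M] where
  i : M → M
  hiv : ∀ a, a * i a * a = a
  hvi : ∀ a, i a * a * i a = i a
  huq : ∀ a x, a * x * a = a → x * a * x = x → x = i a

namespace MyInv

variable {M : Type*} [Monoid M]

lemma hiv₁ (d : MyInv M) (a x : M) : a * (d.i a * (a * x)) = a * x := by
  have h := congrArg (fun y => y * x) (d.hiv a)
  simpa only [mul_assoc] using h

lemma hiv₀ (d : MyInv M) (a : M) : a * (d.i a * a) = a := by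
  simpa only [mul_assoc] using d.hiv a

lemma hvi₁ (d : MyInv M) (a x : M) : d.i a * (a * (d.i a * x)) = d.i a * x := by
  have h := congrArg (fun y => y * x) (d.hvi a)
  simpa only [mul_assoc] using h

lemma hvi₀ (d : MyInv M) (a : M) : d.i a * (a * d.i a) = d.i a := by
  simpa only [mul_assoc] using d.hvi a

lemma inv_inv (d : MyInv M) (a : M) : d.i (d.i a) = a :=
  (d.huq (d.i a) a (d.hvi a) (d.hiv a)).symm

lemma i_idem (d : MyInv M) {e : M} (h : e * e = e) : d.i e = e :=
  (d.huq e e (by rw [h, h]) (by rw [h, h])).symm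

lemma idemR (d : MyInv M) (a : M) : (a * d.i a) * (a * d.i a) = a * d.i a := by
  simp only [mul_assoc]; rw [d.hiv₁]

lemma idemL (d : MyInv M) (a : M) : (d.i a * a) * (d.i a * a) = d.i a * a := by
  simp only [mul_assoc]; rw [d.hvi₁]

lemma idem_mul (d : MyInv M) {e f : M} (he : e * e = e) (hf : f * f = f) :
    (e * f) * (e * f) = e * f := by
  have he₁ : ∀ y : M, e * (e * y) = e * y := fun y => by rw [← mul_assoc, he]
  have hf₁ : ∀ y : M, f * (f * y) = f * y := fun y => by rw [← mul_assoc, hf]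
  have hx1 : (e * f) * d.i (e * f) * (e * f) = e * f := d.hiv _
  have hx2 : d.i (e * f) * (e * f) * d.i (e * f) = d.i (e * f) := d.hvi _
  have hx2' : ∀ y : M, d.i (e * f) * (e * (f * (d.i (e * f) * y))) = d.i (e * f) * y := by
    intro y
    have h := congrArg (fun w => w * y) hx2
    simpa only [mul_assoc] using h
  have c1 : (e * f) * (f * d.i (e * f) * e) * (e * f) = e * f := by
    have h := hx1
    simp only [mul_assoc] at h ⊢
    rw [hf₁, he₁]
    exact h
  have c2 : (f * d.i (e * f) * e) * (e * f) * (f * d.i (e * f) * e) = f * d.i (e * f) * e := by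
    simp only [mul_assoc]
    rw [he₁, hf₁, hx2']
  have hfxe : f * d.i (e * f) * e = d.i (e * f) := d.huq (e * f) _ c1 c2
  have hxx : d.i (e * f) * d.i (e * f) = d.i (e * f) := by
    have h5 : (f * d.i (e * f) * e) * (f * d.i (e * f) * e) = f * d.i (e * f) * e := by
      simp only [mul_assoc]
      rw [hx2']
    rw [hfxe] at h5; exact h5
  have hefx : e * f = d.i (d.i (e * f)) := d.huq (d.i (e * f)) (e * f) hx2 hx1
  have : e * f = d.i (e * f) := hefx.trans (d.i_idem hxx)
  rw [this]; exact hxx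

lemma idem_comm (d : MyInv M) {e f : M} (he : e * e = e) (hf : f * f = f) : e * f = f * e := by
  have h1 := d.idem_mul he hf
  have h2 := d.idem_mul hf he
  have he₁ : ∀ y : M, e * (e * y) = e * y := fun y => by rw [← mul_assoc, he]
  have hf₁ : ∀ y : M, f * (f * y) = f * y := fun y => by rw [← mul_assoc, hf]
  have c3 : (e * f) * (f * e) * (e * f) = e * f := by
    simp only [mul_assoc]
    rw [hf₁, he₁]
    simpa only [mul_assoc] using h1
  have c4 : (f * e) * (e * f) * (f * e) = f * e := by
    simp only [mul_assoc]
    rw [he₁, hf₁]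
    simpa only [mul_assoc] using h2
  have hfe : f * e = d.i (e * f) := d.huq (e * f) (f * e) c3 c4
  rw [hfe, d.i_idem h1]

lemma mul_i (d : MyInv M) (a b : M) : d.i (a * b) = d.i b * d.i a := by
  have hb : (b * d.i b) * (b * d.i b) = b * d.i b := d.idemR b
  have ha : (d.i a * a) * (d.i a * a) = d.i a * a := d.idemL a
  have hcomm := d.idem_comm hb ha
  refine (d.huq (a * b) (d.i b * d.i a) ?_ ?_).symm
  · calc a * b * (d.i b * d.i a) * (a * b)
        = a * ((b * d.i b) * (d.i a * a)) * b := by simp only [mul_assoc]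
      _ = a * ((d.i a * a) * (b * d.i b)) * b := by rw [hcomm]
      _ = a * b := by simp only [mul_assoc]; rw [d.hiv₁, d.hiv₀]
  · calc (d.i b * d.i a) * (a * b) * (d.i b * d.i a)
        = d.i b * ((d.i a * a) * (b * d.i b)) * d.i a := by simp only [mul_assoc]
      _ = d.i b * ((b * d.i b) * (d.i a * a)) * d.i a := by rw [← hcomm]
      _ = d.i b * d.i a := by simp only [mul_assoc]; rw [d.hvi₁, d.hvi₀]

end MyInv

lemma sq' {M : Type*} [Monoid M] {x y z : M} (h1 : x * y = x) (h2 : z * y = y)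
    (h3 : x = z) : y = x := by
  calc y = z * y := h2.symm
    _ = x * y := by rw [h3]
    _ = x := h1

lemma sq2' {M : Type*} [Monoid M] {x y z : M} (h1 : x * y = x) (h2 : y * z = y)
    (h3 : x = z) (hc : x * y = y * x) : y = x := by
  calc y = y * z := h2.symm
    _ = y * x := by rw [← h3]
    _ = x * y := hc.symm
    _ = x := h1

namespace MyInv

variable {M : Type*} [Monoid M]

lemma htrivial (d : MyInv M) (n₀ : ℕ) (hap : ∀ m : M, m ^ (n₀ + 1) = m ^ n₀) {a b : M}
    (h1 : a * d.i a = b * d.i b) (h2 : d.i a * a = d.i b * b) : a = b := by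
  have hig : d.i (a * d.i b) = b * d.i a := by rw [d.mul_i, d.inv_inv]
  have e1 : (a * d.i b) * d.i (a * d.i b) = a * d.i a := by
    rw [hig]
    calc a * d.i b * (b * d.i a) = a * (d.i b * b) * d.i a := by simp only [mul_assoc]
      _ = a * (d.i a * a) * d.i a := by rw [h2]
      _ = a * d.i a := by simp only [mul_assoc]; rw [d.hvi₀]
  have e2 : d.i (a * d.i b) * (a * d.i b) = a * d.i a := by
    rw [hig]
    calc b * d.i a * (a * d.i b) = b * (d.i a * a) * d.i b := by simp only [mul_assoc]
      _ = b * (d.i b * b) * d.i b := by rw [h2]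
      _ = b * d.i b := by simp only [mul_assoc]; rw [d.hvi₀]
      _ = a * d.i a := h1.symm
  have hge : (a * d.i b) * (a * d.i a) = a * d.i b := by
    rw [← e2, ← mul_assoc]
    exact d.hiv (a * d.i b)
  have hpow : ∀ k : ℕ, (a * d.i b) ^ (k + 1) * (d.i (a * d.i b)) ^ (k + 1) = a * d.i a := by
    intro k; induction k with
    | zero => simpa only [zero_add, pow_one] using e1
    | succ k ih =>
      calc (a * d.i b) ^ (k + 2) * (d.i (a * d.i b)) ^ (k + 2)
          = ((a * d.i b) * (a * d.i b) ^ (k + 1)) *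
            ((d.i (a * d.i b)) ^ (k + 1) * d.i (a * d.i b)) := by
            rw [pow_succ' (a * d.i b), pow_succ (d.i (a * d.i b))]
        _ = (a * d.i b) * ((a * d.i b) ^ (k + 1) * (d.i (a * d.i b)) ^ (k + 1)) *
            d.i (a * d.i b) := by simp only [mul_assoc]
        _ = (a * d.i b) * (a * d.i a) * d.i (a * d.i b) := by rw [ih]
        _ = (a * d.i b) * d.i (a * d.i b) := by rw [hge]
        _ = a * d.i a := e1
  have hgg : (a * d.i b) ^ (n₀ + 2) = (a * d.i b) ^ (n₀ + 1) := by
    calc (a * d.i b) ^ (n₀ + 2) = (a * d.i b) * (a * d.i b) ^ (n₀ + 1) := pow_succ' _ _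
      _ = (a * d.i b) * (a * d.i b) ^ n₀ := by rw [hap (a * d.i b)]
      _ = (a * d.i b) ^ (n₀ + 1) := (pow_succ' _ _).symm
  have hg_eq : a * d.i b = a * d.i a := by
    calc a * d.i b = (a * d.i b) * (a * d.i a) := hge.symm
      _ = (a * d.i b) * ((a * d.i b) ^ (n₀ + 1) * (d.i (a * d.i b)) ^ (n₀ + 1)) := by
          rw [hpow n₀]
      _ = ((a * d.i b) * (a * d.i b) ^ (n₀ + 1)) * (d.i (a * d.i b)) ^ (n₀ + 1) :=
          (mul_assoc _ _ _).symm
      _ = (a * d.i b) ^ (n₀ + 2) * (d.i (a * d.i b)) ^ (n₀ + 1) := by rw [← pow_succ']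
      _ = (a * d.i b) ^ (n₀ + 1) * (d.i (a * d.i b)) ^ (n₀ + 1) := by rw [hgg]
      _ = a * d.i a := hpow n₀
  calc a = a * (d.i a * a) := (d.hiv₀ a).symm
    _ = a * (d.i b * b) := by rw [h2]
    _ = (a * d.i b) * b := (mul_assoc _ _ _).symm
    _ = (a * d.i a) * b := by rw [hg_eq]
    _ = (b * d.i b) * b := by rw [h1]
    _ = b := d.hiv b

lemma two_factor (d : MyInv M) (x y : M) (h1 : x * y * d.i (x * y) = x * d.i x)
    (h2 : d.i (x * y) * (x * y) = d.i y * y) : d.i x * x = y * d.i y := by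
  rw [d.mul_i] at h1 h2
  have h1' := congrArg (fun w => d.i x * w * x) h1
  simp only [mul_assoc] at h1'
  rw [d.hvi₁] at h1'
  have k1 : (d.i x * x) * ((y * d.i y) * (d.i x * x)) = d.i x * x := by
    simpa only [mul_assoc] using h1'
  have h2' := congrArg (fun w => y * w * d.i y) h2
  simp only [mul_assoc] at h2'
  rw [d.hiv₁] at h2'
  have k2 : (y * d.i y) * ((d.i x * x) * (y * d.i y)) = y * d.i y := by
    simpa only [mul_assoc] using h2'
  have hX := d.idemL x
  have hY := d.idemR y
  have hc := d.idem_comm hX hY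
  have k1' : (d.i x * x) * (y * d.i y) = d.i x * x := by
    rw [← hc, ← mul_assoc, hX] at k1; exact k1
  have k2' : (y * d.i y) * (d.i x * x) = y * d.i y := by
    rw [hc, ← mul_assoc, hY] at k2; exact k2
  exact k1'.symm.trans (hc.trans k2')

lemma W1 (d : MyInv M) (p q : M) :
    (p * q) * d.i (p * q) * (p * d.i p) = (p * q) * d.i (p * q) := by
  rw [d.mul_i]
  simp only [mul_assoc]
  rw [d.hvi₀]

lemma W2 (d : MyInv M) (p q x : M) :
    (p * d.i p) * (p * q * x) = p * q * x := by
  simp only [mul_assoc]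
  rw [d.hiv₁]

lemma W3 (d : MyInv M) (p q : M) :
    (d.i (p * q) * (p * q)) * (d.i q * q) = d.i (p * q) * (p * q) := by
  rw [d.mul_i]
  simp only [mul_assoc]
  rw [d.hiv₀]

lemma W1t (d : MyInv M) (p q r : M) :
    (p * q * r) * d.i (p * q * r) * (p * d.i p) = (p * q * r) * d.i (p * q * r) := by
  rw [d.mul_i, d.mul_i]
  simp only [mul_assoc]
  rw [d.hvi₀]

lemma W3t (d : MyInv M) (p q r : M) :
    (d.i (p * q * r) * (p * q * r)) * (d.i r * r) = d.i (p * q * r) * (p * q * r) := by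
  rw [d.mul_i]
  simp only [mul_assoc]
  rw [d.hiv₀]

end MyInv
namespace MyInv

variable {M : Type*} [Monoid M]

theorem key (d : MyInv M) (n₀ : ℕ) (hap : ∀ m : M, m ^ (n₀ + 1) = m ^ n₀)
    (a b z₁ z₂ : M)
    (H1 : a*z₁*b * d.i (a*z₁*b) = a * d.i a)
    (H2 : b*z₁*a * d.i (b*z₁*a) = b * d.i b)
    (H3 : d.i (a*z₁*b) * (a*z₁*b) = d.i b * b)
    (H4 : d.i (b*z₁*a) * (b*z₁*a) = d.i a * a)
    (H5 : a*z₁*b*z₂*(b*z₁*a) * d.i (a*z₁*b*z₂*(b*z₁*a)) = a*z₁*b * d.i (a*z₁*b))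
    (H6 : b*z₁*a*z₂*(a*z₁*b) * d.i (b*z₁*a*z₂*(a*z₁*b)) = b*z₁*a * d.i (b*z₁*a))
    (H7 : d.i (a*z₁*b*z₂*(b*z₁*a)) * (a*z₁*b*z₂*(b*z₁*a)) = d.i (b*z₁*a) * (b*z₁*a))
    (H8 : d.i (b*z₁*a*z₂*(a*z₁*b)) * (b*z₁*a*z₂*(a*z₁*b)) = d.i (a*z₁*b) * (a*z₁*b)) :
    a = b := by
  have hss : a*z₁ * d.i (a*z₁) = a * d.i a :=
    (sq' (d.W1 (a*z₁) b) (d.W2 a z₁ (d.i (a*z₁))) H1).trans H1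
  have htt : b*z₁ * d.i (b*z₁) = b * d.i b :=
    (sq' (d.W1 (b*z₁) a) (d.W2 b z₁ (d.i (b*z₁))) H2).trans H2
  have hs1 : a*z₁*b*z₂ * d.i (a*z₁*b*z₂) = a * d.i a :=
    ((sq' (d.W1 (a*z₁*b*z₂) (b*z₁*a)) (d.W2 (a*z₁*b) z₂ (d.i (a*z₁*b*z₂))) H5).trans H5).trans H1
  have ht1 : b*z₁*a*z₂ * d.i (b*z₁*a*z₂) = b * d.i b :=
    ((sq' (d.W1 (b*z₁*a*z₂) (a*z₁*b)) (d.W2 (b*z₁*a) z₂ (d.i (b*z₁*a*z₂))) H6).trans H6).trans H2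
  have hu : d.i (z₁*b) * (z₁*b) = d.i b * b := by
    refine (sq2' ?_ (d.W3 z₁ b) H3 (d.idem_comm (d.idemL (a*z₁*b)) (d.idemL (z₁*b)))).trans H3
    show d.i (a*z₁*b) * (a*z₁*b) * (d.i (z₁*b) * (z₁*b)) = d.i (a*z₁*b) * (a*z₁*b)
    rw [mul_assoc a z₁ b]
    exact d.W3 a (z₁*b)
  have hv : d.i (z₁*a) * (z₁*a) = d.i a * a := by
    refine (sq2' ?_ (d.W3 z₁ a) H4 (d.idem_comm (d.idemL (b*z₁*a)) (d.idemL (z₁*a)))).trans H4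
    show d.i (b*z₁*a) * (b*z₁*a) * (d.i (z₁*a) * (z₁*a)) = d.i (b*z₁*a) * (b*z₁*a)
    rw [mul_assoc b z₁ a]
    exact d.W3 b (z₁*a)
  have D5 : d.i (a*z₁) * (a*z₁) = b * d.i b :=
    d.two_factor (a*z₁) b (H1.trans hss.symm) H3
  have D7 : d.i (b*z₁) * (b*z₁) = a * d.i a :=
    d.two_factor (b*z₁) a (H2.trans htt.symm) H4
  have D6 : d.i a * a = (z₁*b) * d.i (z₁*b) := by
    refine d.two_factor a (z₁*b) ?_ ?_
    · rw [← mul_assoc a z₁ b]; exact H1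
    · rw [← mul_assoc a z₁ b]; exact H3.trans hu.symm
  have D8 : d.i b * b = (z₁*a) * d.i (z₁*a) := by
    refine d.two_factor b (z₁*a) ?_ ?_
    · rw [← mul_assoc b z₁ a]; exact H2
    · rw [← mul_assoc b z₁ a]; exact H4.trans hv.symm
  have D14 : d.i (a*z₁*b*z₂) * (a*z₁*b*z₂) = b * d.i b :=
    (d.two_factor (a*z₁*b*z₂) (b*z₁*a) (H5.trans (H1.trans hs1.symm)) H7).trans H2
  have D17 : d.i (b*z₁*a*z₂) * (b*z₁*a*z₂) = a * d.i a :=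
    (d.two_factor (b*z₁*a*z₂) (a*z₁*b) (H6.trans (H2.trans ht1.symm)) H8).trans H1
  have hXs : d.i (a*z₁) * (a*z₁) = d.i (a*z₁) * d.i (d.i (a*z₁)) := by rw [d.inv_inv]
  have hYs : (a*z₁) * d.i (a*z₁) = d.i (d.i (a*z₁)) * d.i (a*z₁) := by rw [d.inv_inv]
  have D9 : b*z₁ = d.i (a*z₁) :=
    d.htrivial n₀ hap (htt.trans (D5.symm.trans hXs)) (D7.trans (hss.symm.trans hYs))
  have D15 : a*z₁*b*z₂ = a*z₁ :=
    d.htrivial n₀ hap (hs1.trans hss.symm) (D14.trans D5.symm)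
  have D18 : b*z₁*a*z₂ = d.i (a*z₁) :=
    d.htrivial n₀ hap (ht1.trans (D5.symm.trans hXs)) (D17.trans (hss.symm.trans hYs))
  have D10 : z₁*b = d.i (z₁*a) := by
    have hXv : d.i (z₁*a) * (z₁*a) = d.i (z₁*a) * d.i (d.i (z₁*a)) := by rw [d.inv_inv]
    have hYv : (z₁*a) * d.i (z₁*a) = d.i (d.i (z₁*a)) * d.i (z₁*a) := by rw [d.inv_inv]
    exact d.htrivial n₀ hap (D6.symm.trans (hv.symm.trans hXv)) (hu.trans (D8.trans hYv))
  have hv_iu : d.i (z₁*b) = z₁*a := by rw [D10, d.inv_inv]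
  have D11 : a*z₁*b = a*d.i a*d.i z₁ := by
    calc a*z₁*b = a*(z₁*b) := mul_assoc _ _ _
      _ = a*d.i (z₁*a) := by rw [D10]
      _ = a*(d.i a*d.i z₁) := by rw [d.mul_i]
      _ = a*d.i a*d.i z₁ := (mul_assoc _ _ _).symm
  have D12 : b*z₁*a = b*d.i b*d.i z₁ := by
    calc b*z₁*a = b*(z₁*a) := mul_assoc _ _ _
      _ = b*d.i (z₁*b) := by rw [hv_iu]
      _ = b*(d.i b*d.i z₁) := by rw [d.mul_i]
      _ = b*d.i b*d.i z₁ := (mul_assoc _ _ _).symm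
  have hsf : a*z₁*(b*d.i b) = a*z₁ := by
    have h := d.hiv₀ (a*z₁)
    rw [D5] at h; exact h
  have D20 : d.i (a*z₁) = b*d.i b*(d.i z₁*z₂) := by
    calc d.i (a*z₁) = b*z₁*a*z₂ := D18.symm
      _ = b*d.i b*d.i z₁*z₂ := by rw [D12]
      _ = b*d.i b*(d.i z₁*z₂) := mul_assoc _ _ _
  have hsw : a*z₁*(d.i z₁*z₂) = a*d.i a := by
    calc a*z₁*(d.i z₁*z₂)
        = a*z₁*(b*d.i b)*(d.i z₁*z₂) := by rw [hsf]
      _ = a*z₁*(b*d.i b*(d.i z₁*z₂)) := mul_assoc _ _ _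
      _ = a*z₁*d.i (a*z₁) := by rw [← D20]
      _ = a*d.i a := hss
  have base : a*d.i a*(d.i z₁*z₂) = a*z₁ := by
    calc a*d.i a*(d.i z₁*z₂) = a*d.i a*d.i z₁*z₂ := (mul_assoc _ _ _).symm
      _ = a*z₁*b*z₂ := by rw [← D11]
      _ = a*z₁ := D15
  have hsPow : ∀ k : ℕ, a*d.i a*(d.i z₁*z₂)^(2*k+1) = a*z₁ := by
    intro k; induction k with
    | zero => rw [pow_one]; exact base
    | succ k ih =>
      calc a*d.i a*(d.i z₁*z₂)^(2*(k+1)+1)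
          = a*d.i a*((d.i z₁*z₂)^(2*k+1)*(d.i z₁*z₂)*(d.i z₁*z₂)) := by
            rw [show 2*(k+1)+1 = (2*k+1)+1+1 by ring, pow_succ, pow_succ]
        _ = (a*d.i a*(d.i z₁*z₂)^(2*k+1))*(d.i z₁*z₂)*(d.i z₁*z₂) := by
            simp only [mul_assoc]
        _ = a*z₁*(d.i z₁*z₂)*(d.i z₁*z₂) := by rw [ih]
        _ = a*d.i a*(d.i z₁*z₂) := by rw [hsw]
        _ = a*z₁ := base
  have hstab : ∀ j : ℕ, (d.i z₁*z₂)^(n₀+j) = (d.i z₁*z₂)^n₀ := by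
    intro j; induction j with
    | zero => rfl
    | succ j ih =>
      calc (d.i z₁*z₂)^(n₀+(j+1)) = (d.i z₁*z₂)^(n₀+j)*(d.i z₁*z₂) := pow_succ _ _
        _ = (d.i z₁*z₂)^n₀*(d.i z₁*z₂) := by rw [ih]
        _ = (d.i z₁*z₂)^(n₀+1) := (pow_succ _ _).symm
        _ = (d.i z₁*z₂)^n₀ := hap _
  have hsP : a*z₁ = a*d.i a*(d.i z₁*z₂)^n₀ := by
    have h := hsPow n₀
    rw [show 2*n₀+1 = n₀+(n₀+1) by ring, hstab (n₀+1)] at h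
    exact h.symm
  have hPP : (d.i z₁*z₂)^n₀*(d.i z₁*z₂)^n₀ = (d.i z₁*z₂)^n₀ := by
    rw [← pow_add, hstab n₀]
  have hs_idem : (a*z₁)*(a*z₁) = a*z₁ := by
    rw [hsP]
    exact d.idem_mul (d.idemR a) hPP
  have his : d.i (a*z₁) = a*z₁ := d.i_idem hs_idem
  have hie : d.i (a*z₁)*(a*d.i a) = d.i (a*z₁) := by
    have h := d.hvi₀ (a*z₁)
    rw [hss] at h; exact h
  have ha1 : a = a*z₁*d.i z₁ := by
    calc a = a*d.i a*a := (d.hiv a).symm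
      _ = a*z₁*d.i (a*z₁)*a := by rw [hss]
      _ = a*z₁*(d.i (a*z₁)*a) := mul_assoc _ _ _
      _ = a*z₁*(b*z₁*a) := by rw [← D9]
      _ = a*z₁*(b*d.i b*d.i z₁) := by rw [D12]
      _ = a*z₁*(b*d.i b)*d.i z₁ := (mul_assoc _ _ _).symm
      _ = a*z₁*d.i z₁ := by rw [hsf]
  have hb1 : b = a*z₁*d.i z₁ := by
    calc b = b*d.i b*b := (d.hiv b).symm
      _ = d.i (a*z₁)*(a*z₁)*b := by rw [D5]
      _ = d.i (a*z₁)*(a*z₁*b) := mul_assoc _ _ _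
      _ = d.i (a*z₁)*(a*d.i a*d.i z₁) := by rw [D11]
      _ = d.i (a*z₁)*(a*d.i a)*d.i z₁ := (mul_assoc _ _ _).symm
      _ = d.i (a*z₁)*d.i z₁ := by rw [hie]
      _ = a*z₁*d.i z₁ := by rw [his]
  exact ha1.trans hb1.symm

end MyInv
noncomputable def nuIdem {M : Type*} [Monoid M] (g : M) : ℕ :=
  Set.ncard {h : M | h * h = h ∧ h * g = h}

lemma nuIdem_mono {M : Type*} [Monoid M] [Finite M] {x y : M} (hxy : x * y = x) :
    nuIdem x ≤ nuIdem y := by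
  apply Set.ncard_le_ncard _ (Set.toFinite _)
  rintro h ⟨hh, hx⟩
  refine ⟨hh, ?_⟩
  conv_lhs => rw [← hx]
  rw [mul_assoc, hxy, hx]

lemma nuIdem_le_card {M : Type*} [Monoid M] [Finite M] (g : M) :
    nuIdem g ≤ Nat.card M := by
  rw [← Set.ncard_univ]
  exact Set.ncard_le_ncard (Set.subset_univ _) (Set.toFinite _)

lemma MyInv.eq_of_nuIdem_eq {M : Type*} [Monoid M] [Finite M] (d : MyInv M) {x y : M}
    (hx : x * x = x) (hy : y * y = y) (hxy : x * y = x) (h : nuIdem x = nuIdem y) :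
    x = y := by
  by_contra hne
  have hsub : {h : M | h * h = h ∧ h * x = h} ⊆ {h : M | h * h = h ∧ h * y = h} := by
    rintro g ⟨hg, hgx⟩
    refine ⟨hg, ?_⟩
    conv_lhs => rw [← hgx]
    rw [mul_assoc, hxy, hgx]
  have hyy : y ∈ {h : M | h * h = h ∧ h * y = h} := ⟨hy, hy⟩
  have hynx : y ∉ {h : M | h * h = h ∧ h * x = h} := by
    rintro ⟨-, hyx⟩
    apply hne
    calc x = x * y := hxy.symm
      _ = y * x := d.idem_comm hx hy
      _ = y := hyx
  have hlt : nuIdem x < nuIdem y :=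
    Set.ncard_lt_ncard ⟨hsub, fun hc => hynx (hc hyy)⟩ (Set.toFinite _)
  omega

lemma find_flat : ∀ (C : ℕ) (f : ℕ → ℕ), f 0 ≤ C → (∀ k, f (k+1) ≤ f k) →
    ∃ k, k + 2 ≤ 2*C + 2 ∧ f (k+1) = f k ∧ f (k+2) = f (k+1) := by
  intro C
  induction C with
  | zero =>
    intro f h0 hm
    have h1 : f 1 ≤ f 0 := hm 0
    have h2 : f 2 ≤ f 1 := hm 1
    refine ⟨0, by omega, ?_, ?_⟩
    · show f 1 = f 0; omega
    · show f 2 = f 1; omega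
  | succ C ih =>
    intro f h0 hm
    by_cases h : f 1 = f 0 ∧ f 2 = f 1
    · exact ⟨0, by omega, h.1, h.2⟩
    · have hne : f 1 ≠ f 0 ∨ f 2 ≠ f 1 := by tauto
      have h1 : f 1 ≤ f 0 := hm 0
      have h2 : f 2 ≤ f 1 := hm 1
      have h20 : f 2 ≤ C := by rcases hne with h' | h' <;> omega
      obtain ⟨k, hk, e1, e2⟩ := ih (fun j => f (j+2)) h20 (fun j => hm (j+2))
      exact ⟨k+2, by omega, e1, e2⟩

/-- general version of `lrho` in any monoid -/
def MalLR {M : Type*} [Monoid M] (x y : M) (z : ℕ → M) : ℕ → M × M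
  | 0 => (x, y)
  | n + 1 =>
    ((MalLR x y z n).1 * z (n + 1) * (MalLR x y z n).2,
     (MalLR x y z n).2 * z (n + 1) * (MalLR x y z n).1)

lemma MalLR_fst {M : Type*} [Monoid M] (x y : M) (z : ℕ → M) (n : ℕ) :
    (MalLR x y z (n+1)).1 = (MalLR x y z n).1 * z (n + 1) * (MalLR x y z n).2 := rfl

lemma MalLR_snd {M : Type*} [Monoid M] (x y : M) (z : ℕ → M) (n : ℕ) :
    (MalLR x y z (n+1)).2 = (MalLR x y z n).2 * z (n + 1) * (MalLR x y z n).1 := rfl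
theorem abstract_MN {M : Type*} [Monoid M] [Finite M] (d : MyInv M)
    (n₀ : ℕ) (hap : ∀ m : M, m ^ (n₀ + 1) = m ^ n₀) :
    ∃ n : ℕ, 0 < n ∧ ∀ (a b : M) (c : ℕ → M),
      (MalLR a b c n).1 = (MalLR a b c n).2 := by
  classical
  refine ⟨2 * (4 * Nat.card M) + 2, by omega, ?_⟩
  intro a b c
  set lam : ℕ → M := fun k => (MalLR a b c k).1 with hlam
  set rho : ℕ → M := fun k => (MalLR a b c k).2 with hrho
  have hls : ∀ k, lam (k+1) = lam k * c (k+1) * rho k := fun k => rfl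
  have hrs : ∀ k, rho (k+1) = rho k * c (k+1) * lam k := fun k => rfl
  set mes : ℕ → ℕ := fun k =>
    nuIdem (lam k * d.i (lam k)) + nuIdem (rho k * d.i (rho k)) +
      nuIdem (d.i (lam k) * lam k) + nuIdem (d.i (rho k) * rho k) with hmes
  have hn1 : ∀ k, nuIdem (lam (k+1) * d.i (lam (k+1))) ≤ nuIdem (lam k * d.i (lam k)) := by
    intro k
    apply nuIdem_mono
    rw [hls k]
    exact d.W1t (lam k) (c (k+1)) (rho k)
  have hn2 : ∀ k, nuIdem (rho (k+1) * d.i (rho (k+1))) ≤ nuIdem (rho k * d.i (rho k)) := by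
    intro k
    apply nuIdem_mono
    rw [hrs k]
    exact d.W1t (rho k) (c (k+1)) (lam k)
  have hn3 : ∀ k, nuIdem (d.i (lam (k+1)) * lam (k+1)) ≤ nuIdem (d.i (rho k) * rho k) := by
    intro k
    apply nuIdem_mono
    rw [hls k]
    exact d.W3t (lam k) (c (k+1)) (rho k)
  have hn4 : ∀ k, nuIdem (d.i (rho (k+1)) * rho (k+1)) ≤ nuIdem (d.i (lam k) * lam k) := by
    intro k
    apply nuIdem_mono
    rw [hrs k]
    exact d.W3t (rho k) (c (k+1)) (lam k)
  have hmono : ∀ k, mes (k+1) ≤ mes k := by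
    intro k
    have h1 := hn1 k; have h2 := hn2 k; have h3 := hn3 k; have h4 := hn4 k
    simp only [hmes]
    omega
  have hm0 : mes 0 ≤ 4 * Nat.card M := by
    have h1 := nuIdem_le_card (lam 0 * d.i (lam 0))
    have h2 := nuIdem_le_card (rho 0 * d.i (rho 0))
    have h3 := nuIdem_le_card (d.i (lam 0) * lam 0)
    have h4 := nuIdem_le_card (d.i (rho 0) * rho 0)
    simp only [hmes]
    omega
  obtain ⟨k, hk2, e1, e2⟩ := find_flat (4 * Nat.card M) mes hm0 hmono
  -- extract numeric equalities at steps k and k+1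
  have q1 := hn1 k; have q2 := hn2 k; have q3 := hn3 k; have q4 := hn4 k
  have r1 : nuIdem (lam (k+2) * d.i (lam (k+2))) ≤ nuIdem (lam (k+1) * d.i (lam (k+1))) := hn1 (k+1)
  have r2 : nuIdem (rho (k+2) * d.i (rho (k+2))) ≤ nuIdem (rho (k+1) * d.i (rho (k+1))) := hn2 (k+1)
  have r3 : nuIdem (d.i (lam (k+2)) * lam (k+2)) ≤ nuIdem (d.i (rho (k+1)) * rho (k+1)) := hn3 (k+1)
  have r4 : nuIdem (d.i (rho (k+2)) * rho (k+2)) ≤ nuIdem (d.i (lam (k+1)) * lam (k+1)) := hn4 (k+1)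
  simp only [hmes] at e1 e2
  have f1 : nuIdem (lam (k+1) * d.i (lam (k+1))) = nuIdem (lam k * d.i (lam k)) := by omega
  have f2 : nuIdem (rho (k+1) * d.i (rho (k+1))) = nuIdem (rho k * d.i (rho k)) := by omega
  have f3 : nuIdem (d.i (lam (k+1)) * lam (k+1)) = nuIdem (d.i (rho k) * rho k) := by omega
  have f4 : nuIdem (d.i (rho (k+1)) * rho (k+1)) = nuIdem (d.i (lam k) * lam k) := by omega
  have g1 : nuIdem (lam (k+2) * d.i (lam (k+2))) = nuIdem (lam (k+1) * d.i (lam (k+1))) := by omega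
  have g2 : nuIdem (rho (k+2) * d.i (rho (k+2))) = nuIdem (rho (k+1) * d.i (rho (k+1))) := by omega
  have g3 : nuIdem (d.i (lam (k+2)) * lam (k+2)) = nuIdem (d.i (rho (k+1)) * rho (k+1)) := by omega
  have g4 : nuIdem (d.i (rho (k+2)) * rho (k+2)) = nuIdem (d.i (lam (k+1)) * lam (k+1)) := by omega
  -- promote to element equalities
  have E1 : lam (k+1) * d.i (lam (k+1)) = lam k * d.i (lam k) :=
    d.eq_of_nuIdem_eq (d.idemR _) (d.idemR _)
      (by rw [hls k]; exact d.W1t (lam k) (c (k+1)) (rho k)) f1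
  have E2 : rho (k+1) * d.i (rho (k+1)) = rho k * d.i (rho k) :=
    d.eq_of_nuIdem_eq (d.idemR _) (d.idemR _)
      (by rw [hrs k]; exact d.W1t (rho k) (c (k+1)) (lam k)) f2
  have E3 : d.i (lam (k+1)) * lam (k+1) = d.i (rho k) * rho k :=
    d.eq_of_nuIdem_eq (d.idemL _) (d.idemL _)
      (by rw [hls k]; exact d.W3t (lam k) (c (k+1)) (rho k)) f3
  have E4 : d.i (rho (k+1)) * rho (k+1) = d.i (lam k) * lam k :=
    d.eq_of_nuIdem_eq (d.idemL _) (d.idemL _)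
      (by rw [hrs k]; exact d.W3t (rho k) (c (k+1)) (lam k)) f4
  have E5 : lam (k+2) * d.i (lam (k+2)) = lam (k+1) * d.i (lam (k+1)) :=
    d.eq_of_nuIdem_eq (d.idemR _) (d.idemR _)
      (by rw [hls (k+1)]; exact d.W1t (lam (k+1)) (c (k+2)) (rho (k+1))) g1
  have E6 : rho (k+2) * d.i (rho (k+2)) = rho (k+1) * d.i (rho (k+1)) :=
    d.eq_of_nuIdem_eq (d.idemR _) (d.idemR _)
      (by rw [hrs (k+1)]; exact d.W1t (rho (k+1)) (c (k+2)) (lam (k+1))) g2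
  have E7 : d.i (lam (k+2)) * lam (k+2) = d.i (rho (k+1)) * rho (k+1) :=
    d.eq_of_nuIdem_eq (d.idemL _) (d.idemL _)
      (by rw [hls (k+1)]; exact d.W3t (lam (k+1)) (c (k+2)) (rho (k+1))) g3
  have E8 : d.i (rho (k+2)) * rho (k+2) = d.i (lam (k+1)) * lam (k+1) :=
    d.eq_of_nuIdem_eq (d.idemL _) (d.idemL _)
      (by rw [hrs (k+1)]; exact d.W3t (rho (k+1)) (c (k+2)) (lam (k+1))) g4
  -- apply the key lemma
  have hls2 : lam (k+2) = lam (k+1) * c (k+2) * rho (k+1) := rfl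
  have hrs2 : rho (k+2) = rho (k+1) * c (k+2) * lam (k+1) := rfl
  have hkey : lam k = rho k := by
    refine d.key n₀ hap (lam k) (rho k) (c (k+1)) (c (k+2)) ?_ ?_ ?_ ?_ ?_ ?_ ?_ ?_
    · rw [← hls k]; exact E1
    · rw [← hrs k]; exact E2
    · rw [← hls k]; exact E3
    · rw [← hrs k]; exact E4
    · rw [← hls k, ← hrs k, ← hls2]; exact E5
    · rw [← hrs k, ← hls k, ← hrs2]; exact E6
    · rw [← hls k, ← hrs k, ← hls2]; exact E7
    · rw [← hrs k, ← hls k, ← hrs2]; exact E8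
  -- propagate equality
  have hprop : ∀ j : ℕ, lam (k + j) = rho (k + j) := by
    intro j; induction j with
    | zero => exact hkey
    | succ j ih =>
      show lam ((k + j) + 1) = rho ((k + j) + 1)
      rw [hls (k+j), hrs (k+j), ih]
  have hfin := hprop (2 * (4 * Nat.card M) + 2 - k)
  rw [show k + (2 * (4 * Nat.card M) + 2 - k) = 2 * (4 * Nat.card M) + 2 by omega] at hfin
  exact hfin
lemma lrho_eq_MalLR {S : Type*} [Semigroup S] (x y : WithOne S) (z : ℕ → WithOne S) :
    ∀ k, lrho x y z k = MalLR x y z k := by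
  intro k; induction k with
  | zero => rfl
  | succ k ih => simp only [lrho, MalLR, ih]


/-- Every finite aperiodic inverse semigroup is Mal'cev nilpotent. -/
theorem isMN_of_aperiodic_inverse (S : Type*) [Semigroup S] [Finite S]
    (hap : ∃ n : ℕ, 0 < n ∧
      ∀ x : S, (x : WithOne S) ^ (n + 1) = (x : WithOne S) ^ n)
    (hinv : ∀ s : S, ∃! x : S, s * x * s = s ∧ x * s * x = x) :
    IsMN S := by
  classical
  haveI : Finite (WithOne S) := by
    have : Fintype S := Fintype.ofFinite S
    exact Finite.of_equiv (Option S) ⟨id, id, fun _ => rfl, fun _ => rfl⟩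
  obtain ⟨n₀, hn₀, hco⟩ := hap
  have hapM : ∀ m : WithOne S, m ^ (n₀ + 1) = m ^ n₀ := by
    intro m
    by_cases hm : m = 1
    · subst hm; simp
    · obtain ⟨x, hx⟩ := WithOne.ne_one_iff_exists.mp hm
      subst hx
      exact hco x
  have exu : ∀ m : WithOne S, ∃! x : WithOne S, m * x * m = m ∧ x * m * x = x := by
    intro m
    by_cases hm : m = 1
    · subst hm
      refine ⟨1, ⟨by simp, by simp⟩, ?_⟩
      rintro y ⟨h1, h2⟩
      simpa using h1
    · obtain ⟨s, hs⟩ := WithOne.ne_one_iff_exists.mp hm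
      subst hs
      obtain ⟨x, hx, hxu⟩ := hinv s
      refine ⟨(x : WithOne S), ⟨?_, ?_⟩, ?_⟩
      · rw [← WithOne.coe_mul, ← WithOne.coe_mul, hx.1]
      · rw [← WithOne.coe_mul, ← WithOne.coe_mul, hx.2]
      · rintro y ⟨h1, h2⟩
        have hy1 : y ≠ 1 := by
          intro h; subst h
          simp only [mul_one, one_mul] at h2
          exact WithOne.coe_ne_one h2
        obtain ⟨t, ht⟩ := WithOne.ne_one_iff_exists.mp hy1
        subst ht
        have h1' : s * t * s = s := by exact_mod_cast h1
        have h2' : t * s * t = t := by exact_mod_cast h2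
        exact_mod_cast congrArg (fun u : S => (u : WithOne S)) (hxu t ⟨h1', h2'⟩)
  have d : MyInv (WithOne S) :=
    { i := fun m => (exu m).choose
      hiv := fun m => ((exu m).choose_spec.1).1
      hvi := fun m => ((exu m).choose_spec.1).2
      huq := fun m x h1 h2 => (exu m).choose_spec.2 x ⟨h1, h2⟩ }
  obtain ⟨n, hn, hall⟩ := abstract_MN d n₀ hapM
  refine ⟨n, hn, ?_⟩
  intro a b c
  rw [lrho_eq_MalLR]
  exact hall _ _ c
end

section
/- There exists a finite aperiodic Mal'cev nilpotent semigroup S containing two idempotents e and f with ef ≠ fe. In particular, the class of finite aperiodic Mal'cev nilpotent semigroups is not contained in the class of finite semigroups with commuting idempotents. -/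
/-- S is aperiodic, Mal'cev nilpotent, and has two non-commuting idempotents. -/
def ApMNWitness (S : Type) [Semigroup S] : Prop :=
  (∃ n : ℕ, 0 < n ∧
    ∀ x : S, (x : WithOne S) ^ (n + 1) = (x : WithOne S) ^ n) ∧
  IsMN S ∧
  ∃ e f : S, e * e = e ∧ f * f = f ∧ e * f ≠ f * e

/-! ### Witness semigroup -/

/-- A 4-element semigroup: zero element `z`, an element `u` with `u*u = z`,
and two idempotents `e`, `f` with `e*f = u ≠ z = f*e`. -/
inductive S4 : Type
  | z | u | e | f
  deriving DecidableEq

instance : Fintype S4 :=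
  ⟨⟨↑[S4.z, S4.u, S4.e, S4.f], by decide⟩, fun x => by cases x <;> decide⟩

namespace S4

def mul : S4 → S4 → S4
  | z, _ => z
  | u, u => z
  | u, z => z
  | u, e => z
  | u, f => u
  | e, z => z
  | e, u => u
  | e, e => e
  | e, f => u
  | f, z => z
  | f, u => z
  | f, e => z
  | f, f => f

instance : Mul S4 := ⟨mul⟩

instance : Semigroup S4 where
  mul_assoc := by decide

instance : DecidableEq (WithOne S4) := fun a b => (inferInstance : DecidableEq (Option S4)) a b
instance : Fintype (WithOne S4) := (inferInstance : Fintype (Option S4))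

end S4

/-- There is a finite aperiodic Mal'cev nilpotent semigroup with two
non-commuting idempotents. -/
theorem exists_aperiodic_MN_noncommuting_idempotents :
    ∃ (S : Type) (inst : Semigroup S) (_ : Finite S), @ApMNWitness S inst := by
  refine ⟨S4, inferInstance, inferInstance, ?_, ?_, S4.e, S4.f, by decide, by decide, by decide⟩
  · exact ⟨2, by norm_num, by decide⟩
  · refine ⟨2, by norm_num, fun a b c => ?_⟩
    show ((a : WithOne S4) * c 1 * b) * c 2 * (b * c 1 * a)
       = (b * c 1 * a) * c 2 * ((a : WithOne S4) * c 1 * b)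
    revert a b
    generalize c 1 = c1
    generalize c 2 = c2
    revert c1 c2
    decide
end
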